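/- arXiv:2403.03912 — 4 statements merged into one kernel-verified Lean document; each statement's English description precedes it below -/
import Mathlib

section
/- Let b > 2 be an integer. Then the map d ↦ K(b,{d}) is strictly increasing on the positive digits: for all integers d, d' with 1 ≤ d < d' ≤ b−1 one has K(b,{d}) < K(b,{d'}); moreover K(b,{d}) < b·log(b) for every positive digit d. -/
open MeasureTheory Real ENNReal

/-- The digamma function `ψ(x) = d/dx log Γ(x)`. -/
noncomputable def digamma (x : ℝ) : ℝ := deriv (fun y => Real.log (Real.Gamma y)) x

/-- The Kempner sum `K(b,E)`: sum of reciprocals of positive integers whose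
base-`b` digits all avoid the excluded set `E`. -/
noncomputable def kempnerSum (b : ℕ) (E : Finset ℕ) : ℝ :=
  ∑' n : ℕ, if n ≠ 0 ∧ ∀ d ∈ Nat.digits b n, d ∉ E then (n : ℝ)⁻¹ else 0

/-- The measure `μ_{b,E}` on `[0,1)`: the sum, over all finite strings of admissible
digits (digits `< b` not in `E`), of the weighted Dirac mass `b^{-l} δ_{n(X)/b^l}`. -/
noncomputable def kempnerMeasure (b : ℕ) (E : Finset ℕ) : Measure ℝ :=
  Measure.sum (fun X : {l : List ℕ // ∀ d ∈ l, d < b ∧ d ∉ E} =>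
    ((b : ℝ≥0∞) ^ X.1.length)⁻¹ •
      Measure.dirac (((Nat.ofDigits b X.1 : ℕ) : ℝ) / (b : ℝ) ^ X.1.length))

/-- `E₁ = E` if `0 ∉ E`, and `E₁ = (E ∪ {b}) \ {0}` if `0 ∈ E`. -/
def Eone (b : ℕ) (E : Finset ℕ) : Finset ℕ :=
  if 0 ∈ E then insert b (E.erase 0) else E

/-- `ζ(s) = ∑_{k ≥ 1} k⁻ˢ`. -/
noncomputable def zetaVal (s : ℕ) : ℝ := ∑' k : ℕ, (((k : ℝ) + 1) ^ s)⁻¹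

/-- `v_m(d) = ∫_{[0,1)} (d - x)^m dμ_{b,E}(x)`. -/
noncomputable def vMoment (b : ℕ) (E : Finset ℕ) (m : ℕ) (d : ℝ) : ℝ :=
  ∫ x in Set.Ico (0 : ℝ) 1, (d - x) ^ m ∂(kempnerMeasure b E)

namespace KemAux

noncomputable def th (b : ℕ) : ℝ := ((b:ℝ) - 2)/((b:ℝ) - 1)

noncomputable def gg (b j : ℕ) : ℝ :=
  (b:ℝ) * (Real.log ((j:ℝ) + th b) - Real.log ((j:ℝ) - 1 + th b))

lemma th_pos {b : ℕ} (hb : 2 < b) : 0 < th b := by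
  have hB : (3:ℝ) ≤ (b:ℝ) := by exact_mod_cast hb
  apply div_pos <;> linarith

lemma th_lt_one {b : ℕ} (hb : 2 < b) : th b < 1 := by
  have hB : (3:ℝ) ≤ (b:ℝ) := by exact_mod_cast hb
  rw [th, div_lt_one (by linarith)]; linarith

lemma gg_nonneg {b : ℕ} (hb : 2 < b) {j : ℕ} (hj : 1 ≤ j) : 0 ≤ gg b j := by
  have hB : (3:ℝ) ≤ (b:ℝ) := by exact_mod_cast hb
  have hJ : (1:ℝ) ≤ (j:ℝ) := by exact_mod_cast hj
  have h1 : 0 < (j:ℝ) - 1 + th b := by have := th_pos hb; linarith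
  have h2 : Real.log ((j:ℝ) - 1 + th b) ≤ Real.log ((j:ℝ) + th b) :=
    Real.log_le_log h1 (by linarith)
  have : (0:ℝ) ≤ (b:ℝ) := by linarith
  unfold gg; nlinarith

lemma gg_anti {b : ℕ} (hb : 2 < b) {j k : ℕ} (hj : 1 ≤ j) (hjk : j ≤ k) :
    gg b k ≤ gg b j := by
  have hB : (3:ℝ) ≤ (b:ℝ) := by exact_mod_cast hb
  have hJ : (1:ℝ) ≤ (j:ℝ) := by exact_mod_cast hj
  have hJK : (j:ℝ) ≤ (k:ℝ) := by exact_mod_cast hjk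
  have hθ := th_pos hb
  have p1 : 0 < (k:ℝ) + th b := by linarith
  have p2 : 0 < (j:ℝ) - 1 + th b := by linarith
  have p3 : 0 < (j:ℝ) + th b := by linarith
  have p4 : 0 < (k:ℝ) - 1 + th b := by linarith
  have key : Real.log (((k:ℝ) + th b) * ((j:ℝ) - 1 + th b)) ≤
      Real.log (((j:ℝ) + th b) * ((k:ℝ) - 1 + th b)) := by
    apply Real.log_le_log (mul_pos p1 p2); nlinarith
  rw [Real.log_mul p1.ne' p2.ne', Real.log_mul p3.ne' p4.ne'] at key
  unfold gg; nlinarith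

set_option maxHeartbeats 800000 in
lemma node_key_real {B M θ : ℝ} (hB : 3 ≤ B) (hM : 1 ≤ M) (hθv : θ = (B-2)/(B-1)) :
    M⁻¹ + (B * Real.log (M*B + B - 2 + θ) - B * Real.log (M*B - 1 + θ))
      < B * (Real.log (M + θ) - Real.log (M - 1 + θ)) := by
  have hB1 : (0:ℝ) < B - 1 := by linarith
  have hθ0 : 0 < θ := by rw [hθv]; apply div_pos <;> linarith
  have hθ1 : θ < 1 := by rw [hθv, div_lt_one hB1]; linarith
  obtain ⟨x, hxdef⟩ : ∃ x:ℝ, x = M*B := ⟨_, rfl⟩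
  have hxB : B ≤ x := by rw [hxdef]; nlinarith
  have hx3 : (3:ℝ) ≤ x := le_trans hB hxB
  have hxpos : (0:ℝ) < x := by linarith
  have h1 : 0 < x + θ*B := by nlinarith
  have h2 : 0 < x - 1 + θ := by linarith
  have h3 : 0 < x + θ*B - B := by nlinarith
  have h4 : 0 < x + B - 2 + θ := by linarith
  obtain ⟨P, hPdef⟩ : ∃ P:ℝ, P = (x + θ*B) * (x - 1 + θ) := ⟨_, rfl⟩
  obtain ⟨Q, hQdef⟩ : ∃ Q:ℝ, Q = (x + θ*B - B) * (x + B - 2 + θ) := ⟨_, rfl⟩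
  have hPpos : 0 < P := hPdef ▸ mul_pos h1 h2
  have hQpos : 0 < Q := hQdef ▸ mul_pos h3 h4
  have hkey : x*(P - Q) - P = x/(B-1) + B*(B-2)/(B-1)^2 := by
    rw [hPdef, hQdef, hθv]; field_simp; ring
  have hslack : 0 < x/(B-1) + B*(B-2)/(B-1)^2 := by
    have c1 : 0 < x/(B-1) := div_pos hxpos hB1
    have c2 : 0 ≤ B*(B-2)/(B-1)^2 := by
      apply div_nonneg (by nlinarith) (by positivity)
    linarith
  have hxPQ : P < x*(P-Q) := by linarith
  have hlog : Real.log Q - Real.log P ≤ Q/P - 1 := by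
    have h := Real.log_le_sub_one_of_pos (div_pos hQpos hPpos)
    rwa [Real.log_div hQpos.ne' hPpos.ne'] at h
  have hQP : Q/P - 1 = -((P-Q)/P) := by field_simp; ring
  have hfrac : 1/x < (P - Q)/P := by
    rw [div_lt_div_iff₀ hxpos hPpos, one_mul]
    linarith [(mul_comm x (P-Q) : x*(P-Q) = (P-Q)*x)]
  have hmain : 1/x < Real.log P - Real.log Q := by
    have h5 : (P-Q)/P ≤ Real.log P - Real.log Q := by
      rw [hQP] at hlog; linarith
    linarith
  have hBne : B ≠ 0 := by linarith
  have e1 : Real.log (M + θ) = Real.log (x + θ*B) - Real.log B := by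
    rw [show M + θ = (x + θ*B)/B by rw [hxdef]; field_simp]
    exact Real.log_div h1.ne' hBne
  have e2 : Real.log (M - 1 + θ) = Real.log (x + θ*B - B) - Real.log B := by
    rw [show M - 1 + θ = (x + θ*B - B)/B by rw [hxdef]; field_simp; ring]
    exact Real.log_div h3.ne' hBne
  have hlogP : Real.log P = Real.log (x+θ*B) + Real.log (x-1+θ) := by
    rw [hPdef]; exact Real.log_mul h1.ne' h2.ne'
  have hlogQ : Real.log Q = Real.log (x+θ*B-B) + Real.log (x+B-2+θ) := by
    rw [hQdef]; exact Real.log_mul h3.ne' h4.ne'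
  have hMinv : M⁻¹ = B * (1/x) := by
    rw [hxdef]; field_simp
  have hmul := mul_lt_mul_of_pos_left hmain (show (0:ℝ) < B by linarith)
  have hexp : B * (Real.log P - Real.log Q)
      = B*Real.log (x+θ*B) + B*Real.log (x-1+θ)
        - B*Real.log (x+θ*B-B) - B*Real.log (x+B-2+θ) := by
    rw [hlogP, hlogQ]; ring
  rw [e1, e2, hMinv, ← hxdef]
  nlinarith [hmul, hexp]

lemma node_key {b : ℕ} (hb : 2 < b) {m : ℕ} (hm : 1 ≤ m) :
    ((m:ℝ))⁻¹ + ((b:ℝ) * Real.log ((m:ℝ)*(b:ℝ) + (b:ℝ) - 2 + th b)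
      - (b:ℝ) * Real.log ((m:ℝ)*(b:ℝ) - 1 + th b)) < gg b m := by
  have hB : (3:ℝ) ≤ (b:ℝ) := by exact_mod_cast hb
  have hM : (1:ℝ) ≤ (m:ℝ) := by exact_mod_cast hm
  exact node_key_real hB hM rfl


lemma tele {b : ℕ} (x : ℝ) (k : ℕ) :
    ∑ r ∈ Finset.range k,
      ((b:ℝ) * Real.log (x + (r:ℝ) + th b) - (b:ℝ) * Real.log (x + (r:ℝ) - 1 + th b))
    = (b:ℝ) * Real.log (x + (k:ℝ) - 1 + th b) - (b:ℝ) * Real.log (x - 1 + th b) := by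
  have h := Finset.sum_range_sub (fun r : ℕ => (b:ℝ) * Real.log (x + (r:ℝ) - 1 + th b)) k
  simp only [Nat.cast_zero, add_zero] at h
  rw [← h]
  apply Finset.sum_congr rfl
  intro r _
  have h1 : x + ((r:ℝ)+1) - 1 + th b = x + (r:ℝ) + th b := by ring
  push_cast
  rw [h1]

noncomputable def FF (b d : ℕ) (n : ℕ) : ℝ :=
  if n ≠ 0 ∧ ∀ c ∈ Nat.digits b n, c ∉ ({d} : Finset ℕ) then (n:ℝ)⁻¹ else 0

noncomputable def GF (b d : ℕ) (n : ℕ) : ℝ :=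
  if n ≠ 0 ∧ ∀ c ∈ Nat.digits b n, c ∉ ({d} : Finset ℕ) then gg b n else 0

lemma FF_nonneg (b d n : ℕ) : 0 ≤ FF b d n := by
  unfold FF; split_ifs with h
  · positivity
  · exact le_refl 0

lemma GF_nonneg {b : ℕ} (hb : 2 < b) (d n : ℕ) : 0 ≤ GF b d n := by
  unfold GF; split_ifs with h
  · exact gg_nonneg hb (Nat.one_le_iff_ne_zero.mpr h.1)
  · exact le_refl 0

lemma digits_single {b j : ℕ} (hb : 2 < b) (h0 : 0 < j) (hjb : j < b) :
    Nat.digits b j = [j] := by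
  rw [Nat.digits_def' (by omega : 1 < b) h0, Nat.mod_eq_of_lt hjb, Nat.div_eq_of_lt hjb]
  simp

lemma cond_child {b d : ℕ} (hb : 2 < b) {m r : ℕ} (hm : 1 ≤ m) (hr : r < b) :
    ((m*b+r ≠ 0 ∧ ∀ c ∈ Nat.digits b (m*b+r), c ∉ ({d} : Finset ℕ)))
      ↔ (r ≠ d ∧ (m ≠ 0 ∧ ∀ c ∈ Nat.digits b m, c ∉ ({d} : Finset ℕ))) := by
  have hbm : b ≤ m * b := by
    calc b = 1 * b := (one_mul b).symm
    _ ≤ m * b := Nat.mul_le_mul_right b hm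
  have h0 : 0 < m*b+r := by omega
  have hmod : (m*b+r) % b = r := by
    rw [mul_comm, Nat.mul_add_mod, Nat.mod_eq_of_lt hr]
  have hdiv : (m*b+r) / b = m := by
    rw [mul_comm, Nat.mul_add_div (by omega), Nat.div_eq_of_lt hr, add_zero]
  rw [Nat.digits_def' (by omega : 1 < b) h0, hmod, hdiv]
  simp only [ne_eq, List.forall_mem_cons, Finset.mem_singleton]
  constructor
  · rintro ⟨-, h1, h2⟩; exact ⟨h1, by omega, h2⟩
  · rintro ⟨h1, -, h2⟩; exact ⟨by omega, h1, h2⟩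

lemma sum_ite_ne (s : Finset ℕ) (d : ℕ) (hd : d ∈ s) (h : ℕ → ℝ) :
    ∑ r ∈ s, (if r ≠ d then h r else 0) = (∑ r ∈ s, h r) - h d := by
  have step : ∀ r ∈ s, (if r ≠ d then h r else 0) = h r - (if r = d then h r else 0) := by
    intro r _; by_cases hr : r = d <;> simp [hr]
  rw [Finset.sum_congr rfl step, Finset.sum_sub_distrib, Finset.sum_ite_eq' s d h, if_pos hd]

lemma children_sum {b d : ℕ} (hb : 2 < b) (hd : d < b) {m : ℕ} (hm : 1 ≤ m)
    (hc : m ≠ 0 ∧ ∀ c ∈ Nat.digits b m, c ∉ ({d} : Finset ℕ)) :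
    ∑ r ∈ Finset.range b, GF b d (m*b+r)
      = (∑ r ∈ Finset.range b, gg b (m*b+r)) - gg b (m*b+d) := by
  have step : ∀ r ∈ Finset.range b, GF b d (m*b+r)
      = (if r ≠ d then gg b (m*b+r) else 0) := by
    intro r hr
    rw [Finset.mem_range] at hr
    unfold GF
    by_cases hrd : r = d
    · rw [if_neg, if_neg]
      · simp [hrd]
      · rw [cond_child hb hm hr]; tauto
    · rw [if_pos, if_pos hrd]
      rw [cond_child hb hm hr]; exact ⟨hrd, hc⟩
  rw [Finset.sum_congr rfl step, sum_ite_ne _ _ (Finset.mem_range.mpr hd)]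

lemma children_zero {b d : ℕ} (hb : 2 < b) {m : ℕ} (hm : 1 ≤ m)
    (hc : ¬(m ≠ 0 ∧ ∀ c ∈ Nat.digits b m, c ∉ ({d} : Finset ℕ))) {r : ℕ} (hr : r < b) :
    GF b d (m*b+r) = 0 := by
  unfold GF
  rw [if_neg]
  rw [cond_child hb hm hr]; tauto

lemma sum_gg_children {b : ℕ} (hb : 2 < b) {m : ℕ} (hm : 1 ≤ m) :
    ∑ r ∈ Finset.range (b-1), gg b (m*b+r)
      = (b:ℝ) * Real.log ((m:ℝ)*(b:ℝ) + (b:ℝ) - 2 + th b)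
        - (b:ℝ) * Real.log ((m:ℝ)*(b:ℝ) - 1 + th b) := by
  have h := tele (b := b) ((m:ℝ)*(b:ℝ)) (b-1)
  have hcast : ((b-1 : ℕ):ℝ) = (b:ℝ) - 1 := by
    have : 1 ≤ b := by omega
    push_cast [this]; ring
  rw [hcast] at h
  have harg : (m:ℝ)*(b:ℝ) + ((b:ℝ) - 1) - 1 + th b = (m:ℝ)*(b:ℝ) + (b:ℝ) - 2 + th b := by
    ring
  rw [harg] at h
  rw [← h]
  apply Finset.sum_congr rfl
  intro r _
  unfold gg
  have : ((m*b+r : ℕ):ℝ) = (m:ℝ)*(b:ℝ) + (r:ℝ) := by push_cast; ring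
  rw [this]
  ring

lemma node_full_strict {b d : ℕ} (hb : 2 < b) (hd1 : 1 ≤ d) (hd2 : d ≤ b - 1)
    {m : ℕ} (hm : 1 ≤ m)
    (hc : m ≠ 0 ∧ ∀ c ∈ Nat.digits b m, c ∉ ({d} : Finset ℕ)) :
    FF b d m + ∑ r ∈ Finset.range b, GF b d (m*b+r) < GF b d m := by
  have hd : d < b := by omega
  have hFF : FF b d m = (m:ℝ)⁻¹ := if_pos hc
  have hGF : GF b d m = gg b m := if_pos hc
  rw [hFF, hGF, children_sum hb hd hm hc]
  have hsplit := Finset.sum_range_succ (fun r => gg b (m*b+r)) (b-1)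
  rw [show b - 1 + 1 = b by omega] at hsplit
  have hanti : gg b (m*b+(b-1)) ≤ gg b (m*b+d) := by
    apply gg_anti hb
    · have : 1 * b ≤ m * b := Nat.mul_le_mul_right b hm
      omega
    · omega
  have hkey := node_key hb hm
  have htel := sum_gg_children hb hm
  linarith

lemma node_full {b d : ℕ} (hb : 2 < b) (hd1 : 1 ≤ d) (hd2 : d ≤ b - 1)
    {m : ℕ} (hm : 1 ≤ m) :
    FF b d m + ∑ r ∈ Finset.range b, GF b d (m*b+r) ≤ GF b d m := by
  by_cases hc : m ≠ 0 ∧ ∀ c ∈ Nat.digits b m, c ∉ ({d} : Finset ℕ)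
  · exact (node_full_strict hb hd1 hd2 hm hc).le
  · have h1 : FF b d m = 0 := if_neg hc
    have h2 : GF b d m = 0 := if_neg hc
    have h3 : ∑ r ∈ Finset.range b, GF b d (m*b+r) = 0 := by
      apply Finset.sum_eq_zero
      intro r hr
      exact children_zero hb hm hc (Finset.mem_range.mp hr)
    rw [h1, h2, h3]; norm_num

lemma reindex {b : ℕ} (hb : 2 < b) (s t : ℕ) (f : ℕ → ℝ) :
    ∑ j ∈ Finset.Ico (s*b) (t*b), f j
      = ∑ m ∈ Finset.Ico s t, ∑ r ∈ Finset.range b, f (m*b+r) := by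
  have hb0 : 0 < b := by omega
  rw [← Finset.sum_product']
  apply Finset.sum_nbij' (i := fun j => (j / b, j % b)) (j := fun p => p.1 * b + p.2)
  · intro j hj
    rw [Finset.mem_Ico] at hj
    rw [Finset.mem_product, Finset.mem_Ico, Finset.mem_range]
    refine ⟨⟨?_, ?_⟩, Nat.mod_lt _ hb0⟩
    · exact (Nat.le_div_iff_mul_le hb0).mpr hj.1
    · exact Nat.div_lt_of_lt_mul (by rw [mul_comm] at hj ⊢; exact hj.2)
  · intro p hp
    rw [Finset.mem_product, Finset.mem_Ico, Finset.mem_range] at hp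
    rw [Finset.mem_Ico]
    constructor
    · calc s * b ≤ p.1 * b := Nat.mul_le_mul_right b hp.1.1
      _ ≤ p.1 * b + p.2 := Nat.le_add_right _ _
    · calc p.1 * b + p.2 < p.1 * b + b := by omega
      _ = (p.1 + 1) * b := by ring
      _ ≤ t * b := Nat.mul_le_mul_right b (by omega)
  · intro j _
    simp only
    rw [mul_comm, Nat.div_add_mod]
  · intro p hp
    rw [Finset.mem_product, Finset.mem_range] at hp
    have h1 : (p.1 * b + p.2) / b = p.1 := by
      rw [mul_comm, Nat.mul_add_div hb0, Nat.div_eq_of_lt hp.2, add_zero]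
    have h2 : (p.1 * b + p.2) % b = p.2 := by
      rw [mul_comm, Nat.mul_add_mod, Nat.mod_eq_of_lt hp.2]
    simp only [h1, h2]
  · intro j _
    simp only
    rw [mul_comm, Nat.div_add_mod]

lemma level_reindex {b d : ℕ} (hb : 2 < b) (n : ℕ) :
    ∑ j ∈ Finset.Ico (b^(n+1)) (b^(n+2)), GF b d j
      = ∑ m ∈ Finset.Ico (b^n) (b^(n+1)), ∑ r ∈ Finset.range b, GF b d (m*b+r) := by
  have e1 : b^(n+1) = b^n * b := pow_succ b n
  have e2 : b^(n+2) = b^(n+1) * b := pow_succ b (n+1)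
  rw [e2]
  conv_lhs => rw [e1]
  exact reindex hb _ _ _

lemma level_le {b d : ℕ} (hb : 2 < b) (hd1 : 1 ≤ d) (hd2 : d ≤ b - 1) (n : ℕ) :
    (∑ j ∈ Finset.Ico (b^n) (b^(n+1)), FF b d j)
      + (∑ j ∈ Finset.Ico (b^(n+1)) (b^(n+2)), GF b d j)
    ≤ ∑ j ∈ Finset.Ico (b^n) (b^(n+1)), GF b d j := by
  rw [level_reindex hb, ← Finset.sum_add_distrib]
  apply Finset.sum_le_sum
  intro m hm
  rw [Finset.mem_Ico] at hm
  have hm1 : 1 ≤ m := le_trans (Nat.one_le_pow _ _ (by omega)) hm.1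
  exact node_full hb hd1 hd2 hm1

lemma level0_lt {b d : ℕ} (hb : 2 < b) (hd1 : 1 ≤ d) (hd2 : d ≤ b - 1) :
    (∑ j ∈ Finset.Ico (b^0) (b^1), FF b d j)
      + (∑ j ∈ Finset.Ico (b^1) (b^2), GF b d j)
    < ∑ j ∈ Finset.Ico (b^0) (b^1), GF b d j := by
  rw [level_reindex hb, ← Finset.sum_add_distrib]
  apply Finset.sum_lt_sum
  · intro m hm
    rw [Finset.mem_Ico] at hm
    have hm1 : 1 ≤ m := by simpa [pow_zero] using hm.1
    exact node_full hb hd1 hd2 hm1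
  · refine ⟨if d = 1 then 2 else 1, ?_, ?_⟩
    · rw [Finset.mem_Ico]
      constructor
      · split_ifs <;> simp [pow_zero]
      · split_ifs <;> simp [pow_one] <;> omega
    · set md : ℕ := if d = 1 then 2 else 1 with hmd
      have hmd1 : 1 ≤ md := by rw [hmd]; split_ifs <;> omega
      have hmdb : md < b := by rw [hmd]; split_ifs <;> omega
      have hmdd : md ≠ d := by rw [hmd]; split_ifs <;> omega
      apply node_full_strict hb hd1 hd2 hmd1
      constructor
      · omega
      · rw [digits_single hb (by omega) hmdb]
        intro c hc
        rw [List.mem_singleton] at hc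
        rw [hc, Finset.mem_singleton]
        exact hmdd

lemma T_bound {b d : ℕ} (hb : 2 < b) (hd1 : 1 ≤ d) (hd2 : d ≤ b - 1) (n : ℕ) :
    (∑ j ∈ Finset.Ico 1 (b^(n+1)), FF b d j)
      + (∑ j ∈ Finset.Ico (b^(n+1)) (b^(n+2)), GF b d j)
    ≤ (∑ j ∈ Finset.Ico 1 b, FF b d j) + (∑ j ∈ Finset.Ico b (b^2), GF b d j) := by
  induction n with
  | zero => simp [pow_one]
  | succ n ih =>
    have h1 : (1:ℕ) ≤ b^(n+1) := Nat.one_le_pow _ _ (by omega)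
    have h2 : b^(n+1) ≤ b^(n+2) := Nat.pow_le_pow_right (by omega) (by omega)
    have hsplit := Finset.sum_Ico_consecutive (FF b d) h1 h2
    have hlev := level_le hb hd1 hd2 (n+1)
    calc (∑ j ∈ Finset.Ico 1 (b^(n+2)), FF b d j)
        + (∑ j ∈ Finset.Ico (b^(n+2)) (b^(n+3)), GF b d j)
        = (∑ j ∈ Finset.Ico 1 (b^(n+1)), FF b d j)
          + ((∑ j ∈ Finset.Ico (b^(n+1)) (b^(n+2)), FF b d j)
            + (∑ j ∈ Finset.Ico (b^(n+2)) (b^(n+3)), GF b d j)) := by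
          rw [← hsplit]; ring
      _ ≤ (∑ j ∈ Finset.Ico 1 (b^(n+1)), FF b d j)
          + (∑ j ∈ Finset.Ico (b^(n+1)) (b^(n+2)), GF b d j) := by
          have := level_le hb hd1 hd2 (n+1)
          linarith
      _ ≤ _ := ih

lemma range_bound {b d : ℕ} (hb : 2 < b) (hd1 : 1 ≤ d) (hd2 : d ≤ b - 1) (N : ℕ) :
    ∑ i ∈ Finset.range N, FF b d i
      ≤ (∑ j ∈ Finset.Ico 1 b, FF b d j) + (∑ j ∈ Finset.Ico b (b^2), GF b d j) := by
  have hC0 : 0 ≤ (∑ j ∈ Finset.Ico 1 b, FF b d j) + (∑ j ∈ Finset.Ico b (b^2), GF b d j) := by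
    apply add_nonneg <;> apply Finset.sum_nonneg <;> intro i _
    · exact FF_nonneg b d i
    · exact GF_nonneg hb d i
  have key : ∑ i ∈ Finset.range N, FF b d i ≤ ∑ j ∈ Finset.Ico 1 (b^(N+1)), FF b d j := by
    have hsub : Finset.range N ⊆ Finset.Ico 0 (b^(N+1)) := by
      rw [Finset.range_eq_Ico]
      apply Finset.Ico_subset_Ico (le_refl 0)
      calc N ≤ b ^ N := (Nat.lt_pow_self (n := N) (by omega : 1 < b)).le
        _ ≤ b ^ (N+1) := Nat.pow_le_pow_right (by omega) (by omega)
    have h1 : ∑ i ∈ Finset.range N, FF b d i ≤ ∑ j ∈ Finset.Ico 0 (b^(N+1)), FF b d j :=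
      Finset.sum_le_sum_of_subset_of_nonneg hsub (fun i _ _ => FF_nonneg b d i)
    have h2 : ∑ j ∈ Finset.Ico 0 (b^(N+1)), FF b d j
        = FF b d 0 + ∑ j ∈ Finset.Ico 1 (b^(N+1)), FF b d j := by
      rw [← Finset.sum_Ico_consecutive (FF b d) (show (0:ℕ) ≤ 1 by omega)
        (Nat.one_le_pow _ _ (by omega))]
      congr 1
      simp
    have h3 : FF b d 0 = 0 := by unfold FF; rw [if_neg]; simp
    rw [h2, h3, zero_add] at h1
    exact h1
  have hG : 0 ≤ ∑ j ∈ Finset.Ico (b^(N+1)) (b^(N+2)), GF b d j :=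
    Finset.sum_nonneg (fun i _ => GF_nonneg hb d i)
  have := T_bound hb hd1 hd2 N
  linarith

lemma G0_le {b d : ℕ} (hb : 2 < b) (hd1 : 1 ≤ d) (hd2 : d ≤ b - 1) :
    ∑ j ∈ Finset.Ico 1 b, GF b d j ≤ (b:ℝ) * Real.log b := by
  have hB : (3:ℝ) ≤ (b:ℝ) := by exact_mod_cast hb
  have step : ∀ j ∈ Finset.Ico 1 b, GF b d j = (if j ≠ d then gg b j else 0) := by
    intro j hj
    rw [Finset.mem_Ico] at hj
    unfold GF
    have hdig : Nat.digits b j = [j] := digits_single hb (by omega) hj.2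
    by_cases hjd : j = d
    · rw [if_neg, if_neg]
      · simp [hjd]
      · rw [hdig]; simp [hjd]
    · rw [if_pos hjd, if_pos]
      refine ⟨by omega, ?_⟩
      rw [hdig]
      intro c hc
      rw [List.mem_singleton] at hc
      rw [hc, Finset.mem_singleton]
      exact hjd
  rw [Finset.sum_congr rfl step,
    sum_ite_ne _ _ (Finset.mem_Ico.mpr ⟨hd1, by omega⟩)]
  have hanti : gg b (b-1) ≤ gg b d := gg_anti hb hd1 hd2
  have hsplit := Finset.sum_Ico_succ_top (show 1 ≤ b - 1 by omega) (gg b)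
  rw [show b - 1 + 1 = b by omega] at hsplit
  have htel : ∑ j ∈ Finset.Ico 1 (b-1), gg b j = (b:ℝ) * Real.log b := by
    rw [Finset.sum_Ico_eq_sum_range]
    rw [show b - 1 - 1 = b - 2 by omega]
    have step2 : ∀ r ∈ Finset.range (b-2), gg b (1+r)
        = ((b:ℝ) * Real.log ((1:ℝ) + (r:ℝ) + th b)
          - (b:ℝ) * Real.log ((1:ℝ) + (r:ℝ) - 1 + th b)) := by
      intro r _
      unfold gg
      have hc : ((1+r : ℕ):ℝ) = (1:ℝ) + (r:ℝ) := by push_cast; ring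
      rw [hc]; ring
    rw [Finset.sum_congr rfl step2, tele (b:=b) (1:ℝ) (b-2)]
    have hc2 : ((b-2:ℕ):ℝ) = (b:ℝ) - 2 := by
      have : 2 ≤ b := by omega
      push_cast [this]; ring
    rw [hc2]
    have hB1 : (b:ℝ) - 1 ≠ 0 := by linarith
    have harg : (1:ℝ) + ((b:ℝ)-2) - 1 + th b = (b:ℝ) * th b := by
      rw [th]; field_simp; ring
    have harg2 : (1:ℝ) - 1 + th b = th b := by ring
    rw [harg, harg2, Real.log_mul (by positivity) (ne_of_gt (th_pos hb))]
    ring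
  linarith

lemma bound_main {b d : ℕ} (hb : 2 < b) (hd1 : 1 ≤ d) (hd2 : d ≤ b - 1) :
    Summable (FF b d) ∧ ∑' n, FF b d n < (b:ℝ) * Real.log b := by
  have hrb : ∀ N, ∑ i ∈ Finset.range N, FF b d i
      ≤ (∑ j ∈ Finset.Ico 1 b, FF b d j) + (∑ j ∈ Finset.Ico b (b^2), GF b d j) :=
    range_bound hb hd1 hd2
  have hsum : Summable (FF b d) := summable_of_sum_range_le (FF_nonneg b d) hrb
  refine ⟨hsum, ?_⟩
  have htsum := Real.tsum_le_of_sum_range_le (FF_nonneg b d) hrb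
  have h0 := level0_lt hb hd1 hd2
  simp only [pow_zero, pow_one] at h0
  have hG0 := G0_le hb hd1 hd2
  linarith

def sw (d d' c : ℕ) : ℕ := if c = d then d' else if c = d' then d else c

def tau (b d d' n : ℕ) : ℕ := Nat.ofDigits b ((Nat.digits b n).map (sw d d'))

section swap

variable {b d d' : ℕ} (hb : 2 < b) (hd1 : 1 ≤ d) (hdd : d < d') (hd2 : d' ≤ b - 1)

lemma sw_invol (hdd : d < d') (c : ℕ) : sw d d' (sw d d' c) = c := by
  unfold sw; split_ifs <;> omega

lemma digits_tau (hb : 2 < b) (hd1 : 1 ≤ d) (hdd : d < d') (hd2 : d' ≤ b - 1) (n : ℕ) :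
    Nat.digits b (tau b d d' n) = (Nat.digits b n).map (sw d d') := by
  apply Nat.digits_ofDigits b (by omega : 1 < b)
  · intro c hc
    obtain ⟨c0, hc0, rfl⟩ := List.mem_map.mp hc
    have := Nat.digits_lt_base (by omega : 1 < b) hc0
    unfold sw; split_ifs <;> omega
  · intro hne
    have hlne : Nat.digits b n ≠ [] := by
      intro h; rw [h] at hne; exact hne rfl
    rw [List.getLast_map]
    have hn0 : n ≠ 0 := by
      intro h; subst h; simp at hlne
    have := Nat.getLast_digit_ne_zero b hn0
    unfold sw; split_ifs <;> omega

lemma tau_invol (hb : 2 < b) (hd1 : 1 ≤ d) (hdd : d < d') (hd2 : d' ≤ b - 1) (n : ℕ) :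
    tau b d d' (tau b d d' n) = n := by
  conv_lhs => rw [tau, digits_tau hb hd1 hdd hd2, List.map_map]
  have hcomp : (sw d d') ∘ (sw d d') = id := funext (sw_invol hdd)
  rw [hcomp, List.map_id, Nat.ofDigits_digits]

lemma tau_ne_zero (hb : 2 < b) (hd1 : 1 ≤ d) (hdd : d < d') (hd2 : d' ≤ b - 1)
    {n : ℕ} (hn : n ≠ 0) : tau b d d' n ≠ 0 := by
  intro h
  have hd := digits_tau hb hd1 hdd hd2 n
  rw [h] at hd
  simp only [Nat.digits_zero] at hd
  have := List.map_eq_nil_iff.mp hd.symm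
  exact hn (Nat.digits_eq_nil_iff_eq_zero.mp this)

lemma ofDigits_map_le (hdd : d < d') :
    ∀ (l : List ℕ), (∀ c ∈ l, c ≠ d) →
      Nat.ofDigits b (l.map (sw d d')) ≤ Nat.ofDigits b l := by
  intro l
  induction l with
  | nil => intro _; simp
  | cons c tl ih =>
    intro h
    rw [List.map_cons, Nat.ofDigits_cons, Nat.ofDigits_cons]
    have h1 : sw d d' c ≤ c := by
      have hc := h c List.mem_cons_self
      unfold sw; split_ifs <;> omega
    have h2 := ih (fun c0 hc0 => h c0 (List.mem_cons_of_mem _ hc0))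
    have h3 : (b:ℕ) * Nat.ofDigits b (tl.map (sw d d')) ≤ b * Nat.ofDigits b tl :=
      Nat.mul_le_mul_left _ h2
    omega

lemma tau_le {n : ℕ} (hdd : d < d') (h : ∀ c ∈ Nat.digits b n, c ≠ d) :
    tau b d d' n ≤ n := by
  conv_rhs => rw [← Nat.ofDigits_digits b n]
  exact ofDigits_map_le hdd _ h

end swap

lemma kmono {b d d' : ℕ} (hb : 2 < b) (hd1 : 1 ≤ d) (hdd : d < d') (hd2 : d' ≤ b - 1) :
    (∑' n, FF b d n) < ∑' n, FF b d' n := by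
  have hd1' : 1 ≤ d' := by omega
  have hdb1 : d ≤ b - 1 := by omega
  have hsd' : Summable (FF b d') := (bound_main hb hd1' hd2).1
  have hsd : Summable (FF b d) := (bound_main hb hd1 hdb1).1
  have hinv : Function.Involutive (tau b d d') := tau_invol hb hd1 hdd hd2
  set e : Equiv.Perm ℕ := hinv.toPerm _ with he
  have key : ∀ n, FF b d n ≤ FF b d' (tau b d d' n) := by
    intro n
    by_cases hc : n ≠ 0 ∧ ∀ c ∈ Nat.digits b n, c ∉ ({d} : Finset ℕ)
    · have havoid : ∀ c ∈ Nat.digits b n, c ≠ d := by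
        intro c hcm
        have := hc.2 c hcm
        simpa using this
      have h1 : tau b d d' n ≠ 0 := tau_ne_zero hb hd1 hdd hd2 hc.1
      have h2 : ∀ c ∈ Nat.digits b (tau b d d' n), c ∉ ({d'} : Finset ℕ) := by
        rw [digits_tau hb hd1 hdd hd2]
        intro c hcm
        obtain ⟨c0, hc0, rfl⟩ := List.mem_map.mp hcm
        have hne := havoid c0 hc0
        rw [Finset.mem_singleton]
        unfold sw; split_ifs <;> omega
      have hle : tau b d d' n ≤ n := tau_le hdd havoid
      rw [FF, if_pos hc, FF, if_pos ⟨h1, h2⟩]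
      apply inv_anti₀
      · have : 0 < tau b d d' n := Nat.pos_of_ne_zero h1
        exact_mod_cast this
      · exact_mod_cast hle
    · rw [FF, if_neg hc]
      exact FF_nonneg b d' _
  have strict : FF b d d' < FF b d' (tau b d d' d') := by
    have hdigd' : Nat.digits b d' = [d'] := digits_single hb (by omega) (by omega)
    have hdigd : Nat.digits b d = [d] := digits_single hb (by omega) (by omega)
    have htau : tau b d d' d' = d := by
      rw [tau, hdigd', List.map_cons, List.map_nil]
      have hsw : sw d d' d' = d := by unfold sw; split_ifs <;> omega
      rw [hsw, Nat.ofDigits_singleton]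
    have hF1 : FF b d d' = ((d':ℝ))⁻¹ := by
      rw [FF, if_pos]
      refine ⟨by omega, ?_⟩
      rw [hdigd']
      intro c hcm
      rw [List.mem_singleton] at hcm
      subst hcm
      rw [Finset.mem_singleton]
      omega
    have hF2 : FF b d' (tau b d d' d') = ((d:ℝ))⁻¹ := by
      rw [htau, FF, if_pos]
      refine ⟨by omega, ?_⟩
      rw [hdigd]
      intro c hcm
      rw [List.mem_singleton] at hcm
      subst hcm
      rw [Finset.mem_singleton]
      omega
    rw [hF1, hF2]
    apply inv_strictAnti₀
    · exact_mod_cast Nat.pos_of_ne_zero (by omega)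
    · exact_mod_cast hdd
  have hsum2 : Summable (fun n => FF b d' (tau b d d' n)) := by
    simpa [he, Function.Involutive.coe_toPerm, Function.comp_def] using e.summable_iff.mpr hsd'
  calc (∑' n, FF b d n) < ∑' n, FF b d' (tau b d d' n) :=
        Summable.tsum_lt_tsum key strict hsd hsum2
    _ = ∑' n, FF b d' n := by simpa [he, Function.Involutive.coe_toPerm] using e.tsum_eq (FF b d')

end KemAux

theorem kempner_single_digit_monotone (b : ℕ) (hb : 2 < b) :
    (∀ d d' : ℕ, 1 ≤ d → d < d' → d' ≤ b - 1 →
      kempnerSum b {d} < kempnerSum b {d'}) ∧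
    (∀ d : ℕ, 1 ≤ d → d ≤ b - 1 → kempnerSum b {d} < (b : ℝ) * Real.log b) := by
  constructor
  · intro d d' h1 h2 h3
    exact KemAux.kmono hb h1 h2 h3
  · intro d h1 h2
    exact (KemAux.bound_main hb h1 h2).2
end

section
/- As b → ∞ one has K(b,{0}) = b·log(b) + ζ(2)/(2b) − ζ(3)/(3b²) + O(b^{−3}); that is, there exist constants C > 0 and B such that for every integer b ≥ B, |K(b,{0}) − b·log(b) − ζ(2)/(2b) + ζ(3)/(3b²)| ≤ C/b³. -/
open MeasureTheory Real ENNReal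

open Finset Real Filter
namespace KemAux
attribute [local instance] Classical.propDecidable
def P (b n : ℕ) : Prop := n ≠ 0 ∧ ∀ d ∈ Nat.digits b n, d ≠ 0
open Classical in
noncomputable def Ab (b L : ℕ) : Finset ℕ := (Finset.range (b^L)).filter (P b)
variable {b : ℕ}

lemma mem_Ab {L n : ℕ} : n ∈ Ab b L ↔ n < b^L ∧ P b n := by
  classical
  simp [Ab]

lemma P_of_lt (hb : 2 ≤ b) {n : ℕ} (h1 : n ≠ 0) (h2 : n < b) : P b n := by
  have hd : Nat.digits b n = [n] := by
    rw [Nat.digits_def' (by omega : 1 < b) (Nat.pos_of_ne_zero h1),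
        Nat.mod_eq_of_lt h2, Nat.div_eq_of_lt h2, Nat.digits_zero]
  exact ⟨h1, by rw [hd]; simpa using h1⟩

lemma digits_step (hb : 2 ≤ b) {m d : ℕ} (hm : m ≠ 0) (hd2 : d < b) :
    Nat.digits b (b*m+d) = d :: Nat.digits b m := by
  have h0 : 0 < b*m+d := by
    have := Nat.pos_of_ne_zero hm; positivity
  rw [Nat.digits_def' (by omega : 1 < b) h0]
  congr 1
  · rw [Nat.mul_add_mod, Nat.mod_eq_of_lt hd2]
  · rw [Nat.mul_add_div (by omega : 0 < b), Nat.div_eq_of_lt hd2, Nat.add_zero]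

lemma P_step (hb : 2 ≤ b) {m d : ℕ} (hm : P b m) (hd1 : 1 ≤ d) (hd2 : d < b) :
    P b (b*m+d) := by
  refine ⟨by have := Nat.pos_of_ne_zero hm.1; positivity, ?_⟩
  rw [digits_step hb hm.1 hd2]
  intro x hx
  rcases List.mem_cons.1 hx with h | h
  · omega
  · exact hm.2 x h

lemma P_unstep (hb : 2 ≤ b) {n : ℕ} (hn : P b n) (hbn : b ≤ n) :
    n % b ≠ 0 ∧ 1 ≤ n % b ∧ n % b < b ∧ P b (n / b) ∧ n = b * (n/b) + n % b := by
  have h1 : 1 < b := by omega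
  have hdig := Nat.digits_def' h1 (by omega : 0 < n)
  have hq : n / b ≠ 0 := by
    have := Nat.one_le_div_iff (by omega : 0 < b) |>.2 hbn
    omega
  have hmod : n % b ≠ 0 := by
    apply hn.2; rw [hdig]; exact List.mem_cons_self
  refine ⟨hmod, Nat.one_le_iff_ne_zero.2 hmod, Nat.mod_lt _ (by omega), ⟨hq, ?_⟩, (Nat.div_add_mod n b).symm⟩
  intro x hx
  apply hn.2; rw [hdig]; exact List.mem_cons_of_mem _ hx

lemma mem_Ab_succ (hb : 2 ≤ b) {L n : ℕ} :
    n ∈ Ab b (L+1) ↔ (n ∈ Ico 1 b) ∨ (∃ m ∈ Ab b L, ∃ d ∈ Ico 1 b, n = b*m + d) := by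
  have hbL : b ≤ b^(L+1) := by
    conv_lhs => rw [← pow_one b]
    exact Nat.pow_le_pow_right (by omega) (by omega)
  constructor
  · intro h
    rw [mem_Ab] at h
    obtain ⟨hlt, hP⟩ := h
    by_cases hcase : n < b
    · left; exact mem_Ico.2 ⟨Nat.one_le_iff_ne_zero.2 hP.1, hcase⟩
    · right
      obtain ⟨_, h1, h2, hPq, heq⟩ := P_unstep hb hP (by omega)
      refine ⟨n / b, mem_Ab.2 ⟨?_, hPq⟩, n % b, mem_Ico.2 ⟨h1, h2⟩, heq⟩
      rw [Nat.div_lt_iff_lt_mul (by omega : 0 < b)]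
      calc n < b^(L+1) := hlt
        _ = b^L * b := by ring
  · rintro (h | ⟨m, hm, d, hd, rfl⟩)
    · rw [mem_Ico] at h
      exact mem_Ab.2 ⟨by omega, P_of_lt hb (by omega) h.2⟩
    · rw [mem_Ab] at hm
      rw [mem_Ico] at hd
      refine mem_Ab.2 ⟨?_, P_step hb hm.2 hd.1 hd.2⟩
      have : m + 1 ≤ b ^ L := hm.1
      have hmul : b * m + b ≤ b * (m+1) := by ring_nf; omega
      calc b*m + d < b*m + b := by omega
        _ ≤ b*(m+1) := hmul
        _ ≤ b * b^L := by exact Nat.mul_le_mul_left b this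
        _ = b^(L+1) := by ring

lemma decomp_inj (hb : 2 ≤ b) {m1 d1 m2 d2 : ℕ} (h1 : d1 < b) (h2 : d2 < b)
    (he : b*m1+d1 = b*m2+d2) : m1 = m2 ∧ d1 = d2 := by
  have e1 : (b*m1+d1)/b = m1 := by
    rw [Nat.mul_add_div (by omega : 0 < b), Nat.div_eq_of_lt h1, Nat.add_zero]
  have e2 : (b*m2+d2)/b = m2 := by
    rw [Nat.mul_add_div (by omega : 0 < b), Nat.div_eq_of_lt h2, Nat.add_zero]
  have hm : m1 = m2 := by rw [← e1, he, e2]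
  subst hm
  exact ⟨rfl, by omega⟩

lemma sum_Ab_succ (hb : 2 ≤ b) (L : ℕ) (f : ℕ → ℝ) :
    ∑ n ∈ Ab b (L+1), f n
      = (∑ d ∈ Ico 1 b, f d) + ∑ m ∈ Ab b L, ∑ d ∈ Ico 1 b, f (b*m+d) := by
  classical
  have hset : Ab b (L+1) = Ico 1 b ∪ ((Ab b L) ×ˢ Ico 1 b).image (fun p => b*p.1+p.2) := by
    ext n
    rw [mem_Ab_succ hb, mem_union, mem_image]
    simp only [mem_product, Prod.exists]
    constructor
    · rintro (h | ⟨m, hm, d, hd, rfl⟩)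
      · exact Or.inl h
      · exact Or.inr ⟨m, d, ⟨hm, hd⟩, rfl⟩
    · rintro (h | ⟨m, d, ⟨hm, hd⟩, rfl⟩)
      · exact Or.inl h
      · exact Or.inr ⟨m, hm, d, hd, rfl⟩
  have hdisj : Disjoint (Ico 1 b) (((Ab b L) ×ˢ Ico 1 b).image (fun p => b*p.1+p.2)) := by
    rw [disjoint_left]
    intro n hn hn2
    rw [mem_Ico] at hn
    obtain ⟨p, hp, hpe⟩ := mem_image.1 hn2
    obtain ⟨hp1, hp2⟩ := mem_product.1 hp
    have hm1 : 1 ≤ p.1 := Nat.one_le_iff_ne_zero.2 (mem_Ab.1 hp1).2.1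
    have : b * 1 ≤ b * p.1 := Nat.mul_le_mul_left b hm1
    rw [mem_Ico] at hp2
    omega
  have hinj : ∀ p ∈ (Ab b L) ×ˢ Ico 1 b, ∀ q ∈ (Ab b L) ×ˢ Ico 1 b,
      b*p.1+p.2 = b*q.1+q.2 → p = q := by
    intro p hp q hq heq
    obtain ⟨_, hp2⟩ := mem_product.1 hp
    obtain ⟨_, hq2⟩ := mem_product.1 hq
    rw [mem_Ico] at hp2 hq2
    obtain ⟨h1, h2⟩ := decomp_inj hb hp2.2 hq2.2 heq
    exact Prod.ext h1 h2
  rw [hset, sum_union hdisj, sum_image hinj, sum_product]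

lemma Ab_zero : Ab b 0 = ∅ := by
  classical
  ext n
  simp only [Ab, pow_zero, Finset.range_one, Finset.mem_filter, Finset.mem_singleton,
    Finset.notMem_empty, iff_false, not_and]
  rintro rfl h
  exact absurd rfl h.1

lemma P_one_le {n : ℕ} (h : P b n) : 1 ≤ n := Nat.one_le_iff_ne_zero.2 h.1

lemma sum_Ab_inv_le (hb : 2 ≤ b) : ∀ L, ∑ n ∈ Ab b L, ((n:ℝ))⁻¹ ≤ (b:ℝ)^2 := by
  have hb0 : (0:ℝ) < b := by positivity
  intro L
  induction L with
  | zero =>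
    rw [Ab_zero, Finset.sum_empty]
    positivity

  | succ L ih =>
    rw [sum_Ab_succ hb L]
    have h1 : ∑ d ∈ Ico 1 b, ((d:ℝ))⁻¹ ≤ (b:ℝ) := by
      calc ∑ d ∈ Ico 1 b, ((d:ℝ))⁻¹ ≤ ∑ d ∈ Ico 1 b, (1:ℝ) := by
            refine sum_le_sum (fun d hd => ?_)
            rw [mem_Ico] at hd
            have : (1:ℝ) ≤ (d:ℝ) := by exact_mod_cast hd.1
            rw [inv_le_one_iff₀]
            right; exact this
        _ = ((b - 1 : ℕ) : ℝ) := by rw [sum_const, Nat.card_Ico]; simp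
        _ ≤ (b:ℝ) := by exact_mod_cast Nat.sub_le b 1
    have h2 : ∀ m ∈ Ab b L, ∑ d ∈ Ico 1 b, ((b*m+d : ℕ):ℝ)⁻¹
        ≤ ((b:ℝ) - 1) * ((b:ℝ) * m)⁻¹ := by
      intro m hm
      have hm1 : 1 ≤ m := P_one_le (mem_Ab.1 hm).2
      have hbm : (0:ℝ) < (b:ℝ) * m := by
        have : (1:ℝ) ≤ (m:ℝ) := by exact_mod_cast hm1
        nlinarith
      calc ∑ d ∈ Ico 1 b, ((b*m+d : ℕ):ℝ)⁻¹ ≤ ∑ d ∈ Ico 1 b, ((b:ℝ)*m)⁻¹ := by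
            refine sum_le_sum (fun d hd => ?_)
            refine inv_anti₀ hbm ?_
            push_cast
            nlinarith [(mem_Ico.1 hd).1]
        _ = ((b-1:ℕ):ℝ) * ((b:ℝ)*m)⁻¹ := by rw [sum_const, Nat.card_Ico, nsmul_eq_mul]
        _ = ((b:ℝ) - 1) * ((b:ℝ)*m)⁻¹ := by
            congr 1
            have : (1:ℕ) ≤ b := by omega
            push_cast [this]
            ring
    calc (∑ d ∈ Ico 1 b, ((d:ℝ))⁻¹) + ∑ m ∈ Ab b L, ∑ d ∈ Ico 1 b, ((b*m+d : ℕ):ℝ)⁻¹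
        ≤ (b:ℝ) + ∑ m ∈ Ab b L, ((b:ℝ) - 1) * ((b:ℝ) * m)⁻¹ := by
          exact add_le_add h1 (sum_le_sum h2)
      _ = (b:ℝ) + ((b:ℝ)-1) * (b:ℝ)⁻¹ * ∑ m ∈ Ab b L, ((m:ℝ))⁻¹ := by
          rw [mul_sum]
          congr 1
          refine sum_congr rfl (fun m hm => ?_)
          rw [mul_inv]
          ring
      _ ≤ (b:ℝ) + ((b:ℝ)-1) * (b:ℝ)⁻¹ * (b:ℝ)^2 := by
          have hc : (0:ℝ) ≤ ((b:ℝ)-1) * (b:ℝ)⁻¹ := by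
            apply mul_nonneg
            · have : (2:ℝ) ≤ (b:ℝ) := by exact_mod_cast hb
              linarith
            · positivity
          nlinarith [ih]
      _ = (b:ℝ) + ((b:ℝ)-1) * (b:ℝ) := by
          field_simp
      _ = (b:ℝ)^2 := by ring

lemma summable_P_inv (hb : 2 ≤ b) : Summable (fun n => if P b n then (n:ℝ)⁻¹ else 0) := by
  classical
  apply summable_of_sum_range_le (c := (b:ℝ)^2)
  · intro n; split_ifs <;> positivity
  · intro N
    have hsub : range N ⊆ range (b^N) := by
      apply range_subset_range.2
      exact le_of_lt (Nat.lt_pow_self (by omega : 1 < b))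
    calc ∑ i ∈ range N, (if P b i then (i:ℝ)⁻¹ else 0)
        ≤ ∑ i ∈ range (b^N), (if P b i then (i:ℝ)⁻¹ else 0) := by
          refine sum_le_sum_of_subset_of_nonneg hsub (fun i _ _ => ?_)
          split_ifs <;> positivity
      _ = ∑ n ∈ Ab b N, (n:ℝ)⁻¹ := by rw [Ab, sum_filter]
      _ ≤ (b:ℝ)^2 := sum_Ab_inv_le hb N

lemma summable_wt (hb : 2 ≤ b) {g : ℕ → ℝ} {c : ℝ}
    (h : ∀ n, P b n → |g n| ≤ c * (n:ℝ)⁻¹) :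
    Summable (fun n => if P b n then g n else 0) := by
  classical
  apply Summable.of_abs
  apply Summable.of_nonneg_of_le (g := fun n => |if P b n then g n else 0|)
    (fun n => abs_nonneg _) ?_ ((summable_P_inv hb).mul_left c)
  intro n
  split_ifs with hP
  · simpa [hP] using h n hP
  · simp [hP]

lemma tendsto_sum_Ab (hb : 2 ≤ b) {g : ℕ → ℝ}
    (hs : Summable (fun n => if P b n then g n else 0)) :
    Tendsto (fun L => ∑ n ∈ Ab b L, g n) atTop (nhds (∑' n, if P b n then g n else 0)) := by
  classical
  have h1 : ∀ L, ∑ n ∈ Ab b L, g n = ∑ i ∈ range (b^L), (if P b i then g i else 0) := by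
    intro L
    rw [Ab, sum_filter]
  have h2 := hs.hasSum.tendsto_sum_nat
  have h3 : Tendsto (fun L => b^L) atTop atTop :=
    tendsto_pow_atTop_atTop_of_one_lt (by omega : 1 < b)
  exact Tendsto.congr (fun L => (h1 L).symm) (h2.comp h3)

/-- `G n = log(n+1) - log n`. -/
noncomputable def G (n : ℕ) : ℝ := Real.log ((n:ℝ)+1) - Real.log (n:ℝ)

/-- `F m = log(b m + 1) - log (b m)`. -/
noncomputable def Fb (b m : ℕ) : ℝ := Real.log ((b:ℝ)*m+1) - Real.log ((b:ℝ)*m)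

lemma sum_Ico_G (hb : 2 ≤ b) : ∑ d ∈ Ico 1 b, G d = Real.log b := by
  rw [sum_Ico_eq_sum_range]
  have : ∀ k, G (1 + k) = (fun j : ℕ => Real.log ((j:ℝ)+1)) (k+1)
      - (fun j : ℕ => Real.log ((j:ℝ)+1)) k := by
    intro k
    simp only [G]
    push_cast
    ring_nf
  rw [sum_congr rfl (fun k _ => this k), sum_range_sub (fun j : ℕ => Real.log ((j:ℝ)+1))]
  have hb1 : (1:ℕ) ≤ b := by omega
  have : (((b-1:ℕ)):ℝ) + 1 = (b:ℝ) := by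
    push_cast [hb1]
    ring
  rw [this]
  simp

lemma sum_Ico_G_shift (hb : 2 ≤ b) {m : ℕ} (hm : 1 ≤ m) :
    ∑ d ∈ Ico 1 b, G (b*m+d) = G m - Fb b m := by
  have hbR : (0:ℝ) < b := by positivity
  have hmR : (1:ℝ) ≤ (m:ℝ) := by exact_mod_cast hm
  rw [sum_Ico_eq_sum_range]
  have : ∀ k, G (b*m + (1 + k)) =
      (fun j : ℕ => Real.log ((b:ℝ)*m + 1 + j)) (k+1)
        - (fun j : ℕ => Real.log ((b:ℝ)*m + 1 + j)) k := by
    intro k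
    simp only [G]
    push_cast
    ring_nf
  rw [sum_congr rfl (fun k _ => this k),
    sum_range_sub (fun j : ℕ => Real.log ((b:ℝ)*m + 1 + j))]
  have hb1 : (1:ℕ) ≤ b := by omega
  have hcast : (((b-1:ℕ)):ℝ) = (b:ℝ) - 1 := by push_cast [hb1]; ring
  rw [hcast]
  have e1 : (b:ℝ)*m + 1 + ((b:ℝ) - 1) = (b:ℝ) * ((m:ℝ)+1) := by ring
  have e2 : (b:ℝ)*m + 1 + (0:ℕ) = (b:ℝ)*m + 1 := by norm_num
  rw [e1, e2]
  rw [Real.log_mul (by positivity) (by positivity)]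
  unfold G Fb
  have : Real.log ((b:ℝ)*m) = Real.log b + Real.log m := by
    rw [Real.log_mul (by positivity) (by positivity)]
  rw [this]
  ring

lemma log_ratio_bounds {y : ℝ} (hy : 0 < y) :
    0 ≤ Real.log (y+1) - Real.log y ∧ Real.log (y+1) - Real.log y ≤ y⁻¹ := by
  constructor
  · exact sub_nonneg.2 (Real.log_le_log hy (by linarith))
  · rw [← Real.log_div (by linarith) (ne_of_gt hy)]
    calc Real.log ((y+1)/y) ≤ (y+1)/y - 1 := Real.log_le_sub_one_of_pos (by positivity)
      _ = y⁻¹ := by field_simp; ring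

lemma summable_G (hb : 2 ≤ b) : Summable (fun n => if P b n then G n else 0) := by
  refine summable_wt hb (c := 1) (fun n hP => ?_)
  have hn : (0:ℝ) < n := by exact_mod_cast P_one_le hP
  obtain ⟨h1, h2⟩ := log_ratio_bounds hn
  rw [one_mul, abs_of_nonneg (by simpa [G, add_comm] using h1)]
  simpa [G, add_comm] using h2

lemma summable_F (hb : 2 ≤ b) : Summable (fun n => if P b n then Fb b n else 0) := by
  refine summable_wt hb (c := 1) (fun n hP => ?_)
  have hn : (1:ℝ) ≤ n := by exact_mod_cast P_one_le hP
  have hbn : (0:ℝ) < (b:ℝ)*n := by positivity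
  obtain ⟨h1, h2⟩ := log_ratio_bounds hbn
  rw [one_mul, abs_of_nonneg (by simpa [Fb, add_comm] using h1)]
  have : ((b:ℝ)*n)⁻¹ ≤ (n:ℝ)⁻¹ := by
    have hle : (n:ℝ) ≤ (b:ℝ)*n := by
      have hb2 : (2:ℝ) ≤ (b:ℝ) := by exact_mod_cast hb
      have := mul_le_mul_of_nonneg_right (by linarith : (1:ℝ) ≤ (b:ℝ))
        (by linarith : (0:ℝ) ≤ (n:ℝ))
      linarith [this]
    exact inv_anti₀ (by linarith) hle
  calc Fb b n ≤ ((b:ℝ)*n)⁻¹ := by simpa [Fb, add_comm] using h2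
    _ ≤ (n:ℝ)⁻¹ := this

lemma tsum_F_eq (hb : 2 ≤ b) :
    ∑' n, (if P b n then Fb b n else 0) = Real.log b := by
  have key : ∀ L, ∑ n ∈ Ab b L, Fb b n
      = Real.log b + (∑ n ∈ Ab b L, G n - ∑ n ∈ Ab b (L+1), G n) := by
    intro L
    have h := sum_Ab_succ hb L G
    rw [sum_Ico_G hb] at h
    have h2 : ∀ m ∈ Ab b L, ∑ d ∈ Ico 1 b, G (b*m+d) = G m - Fb b m :=
      fun m hm => sum_Ico_G_shift hb (P_one_le (mem_Ab.1 hm).2)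
    rw [sum_congr rfl h2, sum_sub_distrib] at h
    linarith [h]
  have t1 := tendsto_sum_Ab hb (summable_F hb)
  have t2 := tendsto_sum_Ab hb (summable_G hb)
  have t3 : Tendsto (fun L => ∑ n ∈ Ab b (L+1), G n) atTop
      (nhds (∑' n, if P b n then G n else 0)) :=
    t2.comp (tendsto_add_atTop_nat 1)
  have t4 : Tendsto (fun L => Real.log b + (∑ n ∈ Ab b L, G n - ∑ n ∈ Ab b (L+1), G n))
      atTop (nhds (Real.log b + ((∑' n, if P b n then G n else 0)
        - (∑' n, if P b n then G n else 0)))) :=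
    tendsto_const_nhds.add (t2.sub t3)
  have t5 := Tendsto.congr (fun L => (key L).symm) t4
  have := tendsto_nhds_unique t1 t5
  rw [this]; ring

lemma log_expansion {y : ℝ} (h0 : 0 < y) (h1 : y ≤ 1/2) :
    |Real.log (1+y) - (y - y^2/2 + y^3/3)| ≤ 2 * y^4 := by
  have habs : |(-y)| < 1 := by rw [abs_neg, abs_of_pos h0]; linarith
  have h := Real.abs_log_sub_add_sum_range_le habs 3
  have hsum : ∑ i ∈ range 3, (-y)^(i+1)/((i:ℝ)+1) = -y + y^2/2 - y^3/3 := by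
    rw [Finset.sum_range_succ, Finset.sum_range_succ, Finset.sum_range_one]
    norm_num
    ring
  rw [hsum] at h
  have he : Real.log (1 - -y) = Real.log (1+y) := by ring_nf
  rw [he, abs_neg, abs_of_pos h0] at h
  have e2 : |Real.log (1+y) - (y - y^2/2 + y^3/3)|
      = |(-y + y^2/2 - y^3/3) + Real.log (1+y)| := by
    congr 1
    ring
  rw [e2]
  calc |(-y + y^2/2 - y^3/3) + Real.log (1+y)| ≤ y^(3+1)/(1-y) := h
    _ ≤ y^4/(1/2) := by
        apply div_le_div_of_nonneg_left (by positivity) (by norm_num) (by linarith)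
    _ = 2*y^4 := by ring

/-- full zeta-type summand -/
noncomputable def Zf (s : ℕ) : ℕ → ℝ := fun n => ((n:ℝ)^s)⁻¹

lemma summable_Zf {s : ℕ} (hs : 2 ≤ s) : Summable (Zf s) := by
  have h := (Real.summable_one_div_nat_pow (p := s)).2 (by omega)
  exact h.congr (fun n => by rw [one_div]; rfl)

lemma tsum_Zf_eq_zeta {s : ℕ} (hs : 2 ≤ s) :
    ∑' n, Zf s n = (∑' k : ℕ, (((k:ℝ)+1)^s)⁻¹) := by
  rw [Summable.tsum_eq_zero_add (summable_Zf hs)]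
  have h0 : Zf s 0 = 0 := by
    simp [Zf, zero_pow (by omega : s ≠ 0)]
  rw [h0, zero_add]
  refine tsum_congr (fun k => ?_)
  simp only [Zf]
  push_cast
  ring_nf

noncomputable def tailTel (N : ℕ) : ℕ → ℝ :=
  fun n => if N ≤ n then (((n:ℝ)-1)⁻¹ - ((n:ℝ))⁻¹) else 0

noncomputable def tailCap (N : ℕ) : ℕ → ℝ := fun m => (((max m N : ℕ):ℝ) - 1)⁻¹

lemma tail_sq_le {N : ℕ} (hN : 2 ≤ N) :
    (Summable fun n : ℕ => if N ≤ n then ((n:ℝ)^2)⁻¹ else 0) ∧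
    ∑' n : ℕ, (if N ≤ n then ((n:ℝ)^2)⁻¹ else 0) ≤ ((N:ℝ)-1)⁻¹ := by
  classical
  have hNR : (2:ℝ) ≤ (N:ℝ) := by exact_mod_cast hN
  have hpt : ∀ n, (if N ≤ n then ((n:ℝ)^2)⁻¹ else 0) ≤ tailTel N n := by
    intro n
    simp only [tailTel]
    by_cases hn : N ≤ n
    · rw [if_pos hn, if_pos hn]
      have hnR : (2:ℝ) ≤ (n:ℝ) := le_trans hNR (by exact_mod_cast hn)
      have e : ((n:ℝ)-1)⁻¹ - ((n:ℝ))⁻¹ = (((n:ℝ)-1) * n)⁻¹ := by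
        have h1 : (n:ℝ) - 1 ≠ 0 := by linarith
        have h2 : (n:ℝ) ≠ 0 := by linarith
        field_simp
        ring
      rw [e]
      apply inv_anti₀ (by nlinarith) (by nlinarith)
    · rw [if_neg hn, if_neg hn]
  have hnn : ∀ n, 0 ≤ tailTel N n := by
    intro n
    simp only [tailTel]
    by_cases hn : N ≤ n
    · rw [if_pos hn]
      have hnR : (2:ℝ) ≤ (n:ℝ) := le_trans hNR (by exact_mod_cast hn)
      have : ((n:ℝ))⁻¹ ≤ ((n:ℝ)-1)⁻¹ := inv_anti₀ (by linarith) (by linarith)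
      linarith
    · rw [if_neg hn]
  have htel : ∀ n : ℕ, tailTel N n = tailCap N n - tailCap N (n+1) := by
    intro n
    by_cases hn : N ≤ n
    · have e1 : max n N = n := max_eq_left hn
      have e2 : max (n+1) N = n+1 := max_eq_left (by omega)
      simp only [tailTel, tailCap, e1, e2, if_pos hn]
      push_cast
      ring_nf
    · have e1 : max n N = N := max_eq_right (by omega)
      have e2 : max (n+1) N = N := max_eq_right (by omega)
      simp only [tailTel, tailCap, e1, e2, if_neg hn, sub_self]
  have hcap0 : tailCap N 0 = ((N:ℝ)-1)⁻¹ := by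
    simp only [tailCap, max_eq_right (by omega : 0 ≤ N)]
  have hsum : HasSum (tailTel N) (((N:ℝ)-1)⁻¹) := by
    rw [hasSum_iff_tendsto_nat_of_nonneg hnn]
    have hps : ∀ M, ∑ n ∈ range M, tailTel N n = ((N:ℝ)-1)⁻¹ - tailCap N M := by
      intro M
      rw [sum_congr rfl (fun n _ => htel n), sum_range_sub' (tailCap N), hcap0]
    rw [show (fun M => ∑ n ∈ range M, tailTel N n)
        = fun M => ((N:ℝ)-1)⁻¹ - tailCap N M from funext hps]
    have hlim : Tendsto (fun M : ℕ => tailCap N M) atTop (nhds 0) := by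
      apply Tendsto.comp tendsto_inv_atTop_zero
      apply tendsto_atTop_add_const_right
      apply tendsto_natCast_atTop_atTop.comp
      exact tendsto_atTop_mono (fun M => le_max_left M N) tendsto_id
    have := (tendsto_const_nhds (x := ((N:ℝ)-1)⁻¹) (f := atTop)).sub hlim
    simpa using this
  have hlhs : Summable (fun n : ℕ => if N ≤ n then ((n:ℝ)^2)⁻¹ else 0) :=
    Summable.of_nonneg_of_le (fun n => by split_ifs <;> positivity) hpt hsum.summable
  refine ⟨hlhs, ?_⟩
  calc ∑' n : ℕ, (if N ≤ n then ((n:ℝ)^2)⁻¹ else 0) ≤ ∑' n, tailTel N n :=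
        Summable.tsum_le_tsum hpt hlhs hsum.summable
    _ = ((N:ℝ)-1)⁻¹ := hsum.tsum_eq

lemma Zf_nonneg (s n : ℕ) : 0 ≤ Zf s n := by unfold Zf; positivity

lemma Z2_le_two : ∑' n, Zf 2 n ≤ 2 := by
  classical
  have hpt : ∀ n, Zf 2 n ≤ (if n = 1 then (1:ℝ) else 0)
      + (if 2 ≤ n then ((n:ℝ)^2)⁻¹ else 0) := by
    intro n
    match n with
    | 0 => simp [Zf]
    | 1 => simp [Zf]
    | (k+2) =>
      have h2 : 2 ≤ k+2 := by omega
      rw [if_neg (by omega), if_pos h2]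
      simp [Zf]
  have hs1 : Summable (fun n : ℕ => if n = 1 then (1:ℝ) else 0) :=
    (hasSum_ite_eq 1 (1:ℝ)).summable
  have hs2 := (tail_sq_le (le_refl 2)).1
  calc ∑' n, Zf 2 n ≤ ∑' n : ℕ, ((if n = 1 then (1:ℝ) else 0)
        + (if 2 ≤ n then ((n:ℝ)^2)⁻¹ else 0)) :=
        Summable.tsum_le_tsum hpt (summable_Zf (le_refl 2)) (hs1.add hs2)
    _ = (∑' n : ℕ, if n = 1 then (1:ℝ) else 0)
        + ∑' n : ℕ, (if 2 ≤ n then ((n:ℝ)^2)⁻¹ else 0) := Summable.tsum_add hs1 hs2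
    _ ≤ 1 + ((2:ℝ)-1)⁻¹ := by
        have h1 : (∑' n : ℕ, if n = 1 then (1:ℝ) else 0) = 1 := tsum_ite_eq 1 (fun _ => (1:ℝ))
        have h2 := (tail_sq_le (le_refl 2)).2
        rw [h1]
        have : ((2:ℕ):ℝ) - 1 = (2:ℝ) - 1 := by norm_num
        rw [this] at h2
        linarith
    _ = 2 := by norm_num

lemma summable_Js (hb : 2 ≤ b) {s : ℕ} (hs : 1 ≤ s) :
    Summable (fun n => if P b n then ((n:ℝ)^s)⁻¹ else 0) := by
  refine summable_wt hb (c := 1) (fun n hP => ?_)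
  have hn : (1:ℝ) ≤ (n:ℝ) := by exact_mod_cast P_one_le hP
  rw [one_mul, abs_of_nonneg (by positivity)]
  exact inv_anti₀ (by linarith) (le_self_pow₀ hn (by omega))

lemma Js_le_Z2 (hb : 2 ≤ b) {s : ℕ} (hs : 2 ≤ s) :
    ∑' n, (if P b n then ((n:ℝ)^s)⁻¹ else 0) ≤ ∑' n, Zf 2 n := by
  refine Summable.tsum_le_tsum (fun n => ?_) (summable_Js hb (by omega)) (summable_Zf (le_refl 2))
  split_ifs with hP
  · have hn : (1:ℝ) ≤ (n:ℝ) := by exact_mod_cast P_one_le hP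
    exact inv_anti₀ (by positivity) (pow_le_pow_right₀ hn hs)
  · exact Zf_nonneg 2 n

lemma Js_nonneg (s : ℕ) : 0 ≤ ∑' n, (if P b n then ((n:ℝ)^s)⁻¹ else 0) :=
  tsum_nonneg (fun n => by split_ifs <;> positivity)

/-- remainder in the cubic expansion of `Fb`. -/
noncomputable def rho (b : ℕ) : ℕ → ℝ := fun n =>
  Fb b n - (((b:ℝ)*n)⁻¹ - (((b:ℝ)*n)⁻¹)^2/2 + (((b:ℝ)*n)⁻¹)^3/3)

lemma rho_abs_le (hb : 2 ≤ b) {n : ℕ} (hn : 1 ≤ n) :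
    |rho b n| ≤ 2 * ((b:ℝ)^4)⁻¹ * ((n:ℝ)^4)⁻¹ := by
  have hbR : (2:ℝ) ≤ (b:ℝ) := by exact_mod_cast hb
  have hnR : (1:ℝ) ≤ (n:ℝ) := by exact_mod_cast hn
  have hbn : (2:ℝ) ≤ (b:ℝ)*n := by nlinarith
  set y : ℝ := ((b:ℝ)*n)⁻¹ with hy
  have hy0 : 0 < y := by rw [hy]; positivity
  have hy2 : y ≤ 1/2 := by
    rw [hy]
    rw [inv_le_comm₀ (by linarith) (by norm_num)]
    linarith
  have hF : Fb b n = Real.log (1+y) := by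
    rw [Fb, hy, ← Real.log_div (by positivity) (by positivity)]
    congr 1
    field_simp
  have h := log_expansion hy0 hy2
  have he : rho b n = Real.log (1+y) - (y - y^2/2 + y^3/3) := by
    rw [rho, hF]
  rw [he]
  calc |Real.log (1+y) - (y - y^2/2 + y^3/3)| ≤ 2*y^4 := h
    _ = 2 * ((b:ℝ)^4)⁻¹ * ((n:ℝ)^4)⁻¹ := by
        rw [hy, mul_inv, mul_pow, inv_pow, inv_pow]
        ring

lemma summable_rho (hb : 2 ≤ b) : Summable (fun n => if P b n then rho b n else 0) := by
  refine summable_wt hb (c := 2) (fun n hP => ?_)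
  have hn : (1:ℝ) ≤ (n:ℝ) := by exact_mod_cast P_one_le hP
  have hbR : (2:ℝ) ≤ (b:ℝ) := by exact_mod_cast hb
  calc |rho b n| ≤ 2 * ((b:ℝ)^4)⁻¹ * ((n:ℝ)^4)⁻¹ := rho_abs_le hb (P_one_le hP)
    _ ≤ 2 * 1 * (n:ℝ)⁻¹ := by
        apply mul_le_mul
        · apply mul_le_mul_of_nonneg_left _ (by norm_num)
          rw [inv_le_one_iff₀]
          right
          exact one_le_pow₀ (by linarith)
        · exact inv_anti₀ (by linarith) (le_self_pow₀ hn (by omega))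
        · positivity
        · norm_num
    _ = 2 * (n:ℝ)⁻¹ := by ring

lemma key_eq (hb : 2 ≤ b) :
    Real.log b = (b:ℝ)⁻¹ * (∑' n, if P b n then (n:ℝ)⁻¹ else 0)
      - (2*(b:ℝ)^2)⁻¹ * (∑' n, if P b n then ((n:ℝ)^2)⁻¹ else 0)
      + (3*(b:ℝ)^3)⁻¹ * (∑' n, if P b n then ((n:ℝ)^3)⁻¹ else 0)
      + (∑' n, if P b n then rho b n else 0) := by
  have hbR : (2:ℝ) ≤ (b:ℝ) := by exact_mod_cast hb
  have hb0 : (b:ℝ) ≠ 0 := by linarith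
  have hg1 : Summable (fun n => (b:ℝ)⁻¹ * (if P b n then (n:ℝ)⁻¹ else 0)) :=
    (summable_P_inv hb).mul_left _
  have hg2 : Summable (fun n => (2*(b:ℝ)^2)⁻¹ * (if P b n then ((n:ℝ)^2)⁻¹ else 0)) :=
    (summable_Js hb (by omega)).mul_left _
  have hg3 : Summable (fun n => (3*(b:ℝ)^3)⁻¹ * (if P b n then ((n:ℝ)^3)⁻¹ else 0)) :=
    (summable_Js hb (by omega)).mul_left _
  have hg4 := summable_rho hb
  rw [← tsum_F_eq hb, ← tsum_mul_left, ← tsum_mul_left, ← tsum_mul_left,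
    ← Summable.tsum_sub hg1 hg2, ← Summable.tsum_add ((hg1.sub hg2)) hg3,
    ← Summable.tsum_add (((hg1.sub hg2)).add hg3) hg4]
  refine tsum_congr (fun n => ?_)
  by_cases hP : P b n
  · simp only [if_pos hP, rho]
    have hn0 : (n:ℝ) ≠ 0 := by
      have : (1:ℝ) ≤ (n:ℝ) := by exact_mod_cast P_one_le hP
      linarith
    field_simp
    ring
  · simp [if_neg hP]

lemma zero_digit_ge (hb : 2 ≤ b) {n : ℕ} (h0 : n ≠ 0) (hnP : ¬ P b n) : b ≤ n := by
  by_contra h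
  exact hnP (P_of_lt hb h0 (by omega))

lemma zero_digit_dvd (hb : 2 ≤ b) {n : ℕ} (h0 : n ≠ 0) (hnP : ¬ P b n)
    (hlt : n < b^2) : b ∣ n := by
  have hbn : b ≤ n := zero_digit_ge hb h0 hnP
  have hdig : Nat.digits b n = n % b :: Nat.digits b (n/b) :=
    Nat.digits_def' (by omega) (by omega)
  have hq : n/b ≠ 0 := by
    have := Nat.one_le_div_iff (by omega : 0 < b) |>.2 hbn
    omega
  have hqlt : n/b < b := by
    rw [Nat.div_lt_iff_lt_mul (by omega : 0 < b)]
    calc n < b^2 := hlt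
      _ = b*b := by ring
  have hdig2 : Nat.digits b (n/b) = [n/b] := by
    rw [Nat.digits_def' (by omega : 1 < b) (Nat.pos_of_ne_zero hq),
      Nat.mod_eq_of_lt hqlt, Nat.div_eq_of_lt hqlt, Nat.digits_zero]
  have hex : ∃ d ∈ Nat.digits b n, d = 0 := by
    by_contra hcon
    push_neg at hcon
    exact hnP ⟨h0, fun d hd => hcon d hd⟩
  obtain ⟨d, hd, rfl⟩ := hex
  rw [hdig, hdig2] at hd
  simp only [List.mem_cons, List.mem_singleton, List.not_mem_nil, or_false] at hd
  rcases hd with h | h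
  · exact Nat.dvd_of_mod_eq_zero h.symm
  · exact absurd h.symm hq

/-- summand of the `s`-th excluded (zero-digit) sum -/
noncomputable def Df (b s : ℕ) : ℕ → ℝ := fun n =>
  if n ≠ 0 ∧ ¬ P b n then ((n:ℝ)^s)⁻¹ else 0

lemma Df_le_Zf (b s : ℕ) : ∀ n, Df b s n ≤ Zf s n := by
  intro n
  unfold Df Zf
  split_ifs with h
  · exact le_refl _
  · positivity

lemma summable_Df (s : ℕ) (hs : 2 ≤ s) : Summable (Df b s) :=
  Summable.of_nonneg_of_le (fun n => by unfold Df; split_ifs <;> positivity)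
    (Df_le_Zf b s) (summable_Zf hs)

lemma Df_nonneg (s : ℕ) : ∀ n, 0 ≤ Df b s n := fun n => by
  unfold Df; split_ifs <;> positivity

lemma D_eq (hb : 2 ≤ b) {s : ℕ} (hs : 2 ≤ s) :
    ∑' n, Df b s n = (∑' n, Zf s n) - ∑' n, (if P b n then ((n:ℝ)^s)⁻¹ else 0) := by
  rw [← Summable.tsum_sub (summable_Zf hs) (summable_Js hb (by omega))]
  refine tsum_congr (fun n => ?_)
  unfold Df Zf
  by_cases hP : P b n
  · rw [if_neg (by tauto), if_pos hP]
    ring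
  · by_cases h0 : n = 0
    · rw [if_neg (by tauto), if_neg hP, h0]
      simp [zero_pow (by omega : s ≠ 0)]
    · rw [if_pos ⟨h0, hP⟩, if_neg hP]
      ring

lemma inv_le_two_div {a c : ℝ} (ha : 0 < a) (hc : 0 < c) (h : c ≤ 2*a) : a⁻¹ ≤ 2/c := by
  rw [inv_eq_one_div, div_le_div_iff₀ ha hc]
  linarith

lemma D3_le (hb : 2 ≤ b) : ∑' n, Df b 3 n ≤ 2/(b:ℝ)^2 := by
  have hbR : (2:ℝ) ≤ (b:ℝ) := by exact_mod_cast hb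
  have htail := tail_sq_le (N := b) hb
  have hpt : ∀ n, Df b 3 n ≤ (b:ℝ)⁻¹ * (if b ≤ n then ((n:ℝ)^2)⁻¹ else 0) := by
    intro n
    unfold Df
    by_cases h : n ≠ 0 ∧ ¬ P b n
    · rw [if_pos h]
      have hbn : b ≤ n := zero_digit_ge hb h.1 h.2
      rw [if_pos hbn]
      have hnR : (b:ℝ) ≤ (n:ℝ) := by exact_mod_cast hbn
      have haux : 0 ≤ (n:ℝ)^2 * ((n:ℝ) - (b:ℝ)) :=
        mul_nonneg (by positivity) (by linarith)
      rw [← mul_inv]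
      exact inv_anti₀ (by nlinarith) (by nlinarith)
    · rw [if_neg h]
      split_ifs <;> positivity
  calc ∑' n, Df b 3 n
      ≤ ∑' n : ℕ, (b:ℝ)⁻¹ * (if b ≤ n then ((n:ℝ)^2)⁻¹ else 0) :=
        Summable.tsum_le_tsum hpt (summable_Df 3 (by omega)) (htail.1.mul_left _)
    _ = (b:ℝ)⁻¹ * ∑' n : ℕ, (if b ≤ n then ((n:ℝ)^2)⁻¹ else 0) := tsum_mul_left
    _ ≤ (b:ℝ)⁻¹ * ((b:ℝ)-1)⁻¹ := by
        apply mul_le_mul_of_nonneg_left htail.2 (by positivity)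
    _ = ((b:ℝ)*((b:ℝ)-1))⁻¹ := by rw [mul_inv]
    _ ≤ 2/(b:ℝ)^2 := inv_le_two_div (by nlinarith) (by positivity) (by nlinarith)

lemma D2_le (hb : 2 ≤ b) : ∑' n, Df b 2 n ≤ 4/(b:ℝ)^2 := by
  classical
  have hbR : (2:ℝ) ≤ (b:ℝ) := by exact_mod_cast hb
  set g1 : ℕ → ℝ := fun n => if b ∣ n ∧ n ≠ 0 then ((n:ℝ)^2)⁻¹ else 0 with hg1
  set g2 : ℕ → ℝ := fun n => if b^2 ≤ n then ((n:ℝ)^2)⁻¹ else 0 with hg2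
  have hb2 : 2 ≤ b^2 := by nlinarith
  have htail := tail_sq_le (N := b^2) hb2
  have hg1nn : ∀ n, 0 ≤ g1 n := fun n => by
    simp only [hg1]; split_ifs <;> positivity
  have hg2nn : ∀ n, 0 ≤ g2 n := fun n => by
    simp only [hg2]; split_ifs <;> positivity
  have hg1sum : Summable g1 := by
    apply Summable.of_nonneg_of_le hg1nn (g := g1) (f := Zf 2) ?_ (summable_Zf (le_refl 2))
    intro n
    simp only [hg1, Zf]
    split_ifs
    · exact le_refl _
    · positivity
  have hpt : ∀ n, Df b 2 n ≤ g1 n + g2 n := by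
    intro n
    unfold Df
    by_cases h : n ≠ 0 ∧ ¬ P b n
    · rw [if_pos h]
      by_cases hlt : n < b^2
      · have hdvd := zero_digit_dvd hb h.1 h.2 hlt
        have he : g1 n = ((n:ℝ)^2)⁻¹ := by simp only [hg1]; rw [if_pos ⟨hdvd, h.1⟩]
        have := hg2nn n
        linarith
      · have he : g2 n = ((n:ℝ)^2)⁻¹ := by simp only [hg2]; rw [if_pos (by omega)]
        have := hg1nn n
        linarith
    · rw [if_neg h]
      have := hg1nn n
      have := hg2nn n
      linarith
  have hg1val : ∑' n, g1 n = ((b:ℝ)^2)⁻¹ * ∑' n, Zf 2 n := by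
    have hinj : Function.Injective (fun m : ℕ => b*m) := fun m1 m2 h => by
      exact Nat.eq_of_mul_eq_mul_left (by omega) h
    have hsupp : Function.support g1 ⊆ Set.range (fun m : ℕ => b*m) := by
      intro n hn
      simp only [hg1, Function.mem_support] at hn
      by_cases h : b ∣ n ∧ n ≠ 0
      · obtain ⟨m, rfl⟩ := h.1
        exact ⟨m, rfl⟩
      · exact absurd (if_neg h) hn
    rw [← hinj.tsum_eq hsupp]
    have hptw : ∀ m : ℕ, g1 (b*m) = ((b:ℝ)^2)⁻¹ * Zf 2 m := by
      intro m
      by_cases hm : m = 0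
      · subst hm
        simp [hg1, Zf]
      · have hcond : b ∣ b*m ∧ b*m ≠ 0 := ⟨Dvd.intro m rfl, by positivity⟩
        simp only [hg1, Zf, if_pos hcond]
        push_cast
        rw [mul_pow, mul_inv]
    rw [tsum_congr hptw, tsum_mul_left]
  have hcast : ((b^2:ℕ):ℝ) = (b:ℝ)^2 := by push_cast; ring
  calc ∑' n, Df b 2 n ≤ ∑' n, (g1 n + g2 n) :=
        Summable.tsum_le_tsum hpt (summable_Df 2 (le_refl 2)) (hg1sum.add htail.1)
    _ = ∑' n, g1 n + ∑' n, g2 n := Summable.tsum_add hg1sum htail.1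
    _ ≤ ((b:ℝ)^2)⁻¹ * 2 + (((b:ℝ)^2)-1)⁻¹ := by
        have h1 : ∑' n, g1 n ≤ ((b:ℝ)^2)⁻¹ * 2 := by
          rw [hg1val]
          exact mul_le_mul_of_nonneg_left Z2_le_two (by positivity)
        have h2 : ∑' n, g2 n ≤ (((b:ℝ)^2)-1)⁻¹ := by
          have := htail.2
          rw [hcast] at this
          exact this
        linarith
    _ ≤ 2/(b:ℝ)^2 + 2/(b:ℝ)^2 := by
        have h1 : ((b:ℝ)^2)⁻¹ * 2 = 2/(b:ℝ)^2 := by ring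
        have h2 : (((b:ℝ)^2)-1)⁻¹ ≤ 2/(b:ℝ)^2 :=
          inv_le_two_div (by nlinarith) (by positivity) (by nlinarith)
        linarith
    _ = 4/(b:ℝ)^2 := by ring

lemma R_abs_le (hb : 2 ≤ b) :
    |∑' n, (if P b n then rho b n else 0)| ≤ 4/(b:ℝ)^4 := by
  have hbR : (2:ℝ) ≤ (b:ℝ) := by exact_mod_cast hb
  have habs : (fun n => |if P b n then rho b n else 0|)
      = fun n => if P b n then |rho b n| else 0 := by
    funext n
    split_ifs <;> simp
  have hsum_abs : Summable (fun n => |if P b n then rho b n else 0|) :=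
    (summable_rho hb).abs
  have hsum_abs' : Summable (fun n => if P b n then |rho b n| else 0) := by
    rw [← habs]; exact hsum_abs
  have hsum_maj : Summable (fun n => (2*((b:ℝ)^4)⁻¹) * (if P b n then ((n:ℝ)^4)⁻¹ else 0)) :=
    (summable_Js hb (by omega)).mul_left _
  calc |∑' n, (if P b n then rho b n else 0)|
      ≤ ∑' n, |if P b n then rho b n else 0| := by
        simpa using norm_tsum_le_tsum_norm (f := fun n => if P b n then rho b n else 0)
          (by simpa [Real.norm_eq_abs] using hsum_abs)
    _ = ∑' n, (if P b n then |rho b n| else 0) := by rw [habs]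
    _ ≤ ∑' n, (2*((b:ℝ)^4)⁻¹) * (if P b n then ((n:ℝ)^4)⁻¹ else 0) := by
        refine Summable.tsum_le_tsum (fun n => ?_) hsum_abs' hsum_maj
        split_ifs with hP
        · have := rho_abs_le hb (P_one_le hP)
          calc |rho b n| ≤ 2 * ((b:ℝ)^4)⁻¹ * ((n:ℝ)^4)⁻¹ := this
            _ = (2*((b:ℝ)^4)⁻¹) * ((n:ℝ)^4)⁻¹ := by ring
        · simp
    _ = (2*((b:ℝ)^4)⁻¹) * ∑' n, (if P b n then ((n:ℝ)^4)⁻¹ else 0) := tsum_mul_left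
    _ ≤ (2*((b:ℝ)^4)⁻¹) * 2 := by
        apply mul_le_mul_of_nonneg_left _ (by positivity)
        exact le_trans (Js_le_Z2 hb (by omega)) Z2_le_two
    _ = 4/(b:ℝ)^4 := by ring

end KemAux


theorem kempner_zero_digit_asymptotic :
    ∃ C > (0 : ℝ), ∃ B : ℕ, ∀ b : ℕ, B ≤ b →
      |kempnerSum b {0} - (b : ℝ) * Real.log b - zetaVal 2 / (2 * b)
        + zetaVal 3 / (3 * (b : ℝ) ^ 2)| ≤ C / (b : ℝ) ^ 3 := by
  classical
  refine ⟨7, by norm_num, 2, fun b hb2 => ?_⟩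
  have hbR : (2:ℝ) ≤ (b:ℝ) := by exact_mod_cast hb2
  have hβpos : (0:ℝ) < (b:ℝ) := by linarith
  have hβ0 : (b:ℝ) ≠ 0 := ne_of_gt hβpos
  -- identify kempnerSum with the P-weighted sum
  have hK : kempnerSum b {0} = ∑' n, (if KemAux.P b n then (n:ℝ)⁻¹ else 0) := by
    unfold kempnerSum
    refine tsum_congr (fun n => ?_)
    refine if_congr ?_ rfl rfl
    simp [KemAux.P]
  have hz2 : zetaVal 2 = ∑' n, KemAux.Zf 2 n := by
    rw [zetaVal]
    exact (KemAux.tsum_Zf_eq_zeta (le_refl 2)).symm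
  have hz3 : zetaVal 3 = ∑' n, KemAux.Zf 3 n := by
    rw [zetaVal]
    exact (KemAux.tsum_Zf_eq_zeta (by omega)).symm
  have hD2eq := KemAux.D_eq (b := b) hb2 (le_refl 2)
  have hD3eq := KemAux.D_eq (b := b) hb2 (by omega : 2 ≤ 3)
  have hkey := KemAux.key_eq (b := b) hb2
  have hD2le := KemAux.D2_le (b := b) hb2
  have hD3le := KemAux.D3_le (b := b) hb2
  have hRle := KemAux.R_abs_le (b := b) hb2
  have hD2nn : 0 ≤ ∑' n, KemAux.Df b 2 n := tsum_nonneg (KemAux.Df_nonneg 2)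
  have hD3nn : 0 ≤ ∑' n, KemAux.Df b 3 n := tsum_nonneg (KemAux.Df_nonneg 3)
  have hE : kempnerSum b {0} - (b:ℝ) * Real.log b - zetaVal 2/(2*(b:ℝ))
      + zetaVal 3/(3*(b:ℝ)^2)
      = -((∑' n, KemAux.Df b 2 n)/(2*(b:ℝ))) + (∑' n, KemAux.Df b 3 n)/(3*(b:ℝ)^2)
        - (b:ℝ) * (∑' n, (if KemAux.P b n then KemAux.rho b n else 0)) := by
    rw [hD2eq, hD3eq, hK, hz2, hz3, hkey]
    field_simp
    ring
  rw [hE]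
  -- convert bounds to multiplied form
  have hD2m : (∑' n, KemAux.Df b 2 n) * (b:ℝ)^2 ≤ 4 := by
    rw [le_div_iff₀ (by positivity)] at hD2le
    exact hD2le
  have hD3m : (∑' n, KemAux.Df b 3 n) * (b:ℝ)^2 ≤ 2 := by
    rw [le_div_iff₀ (by positivity)] at hD3le
    exact hD3le
  have hRm : |∑' n, (if KemAux.P b n then KemAux.rho b n else 0)| * (b:ℝ)^4 ≤ 4 := by
    rw [le_div_iff₀ (by positivity)] at hRle
    exact hRle
  have h1 : (∑' n, KemAux.Df b 2 n)/(2*(b:ℝ)) ≤ 2/(b:ℝ)^3 := by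
    rw [div_le_div_iff₀ (by positivity) (by positivity)]
    nlinarith [mul_nonneg (sub_nonneg.2 hD2m) (le_of_lt hβpos)]
  have h2 : (∑' n, KemAux.Df b 3 n)/(3*(b:ℝ)^2) ≤ 1/(b:ℝ)^3 := by
    rw [div_le_div_iff₀ (by positivity) (by positivity)]
    nlinarith [mul_nonneg (sub_nonneg.2 hD3m) (le_of_lt hβpos),
      mul_pos hβpos (mul_pos hβpos hβpos)]
  have h1nn : 0 ≤ (∑' n, KemAux.Df b 2 n)/(2*(b:ℝ)) := by positivity
  have h2nn : 0 ≤ (∑' n, KemAux.Df b 3 n)/(3*(b:ℝ)^2) := by positivity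
  have h3 : |(b:ℝ) * (∑' n, (if KemAux.P b n then KemAux.rho b n else 0))| ≤ 4/(b:ℝ)^3 := by
    rw [abs_mul, abs_of_pos hβpos, le_div_iff₀ (by positivity)]
    calc (b:ℝ) * |∑' n, (if KemAux.P b n then KemAux.rho b n else 0)| * (b:ℝ)^3
        = |∑' n, (if KemAux.P b n then KemAux.rho b n else 0)| * (b:ℝ)^4 := by ring
      _ ≤ 4 := hRm
  obtain ⟨h3l, h3r⟩ := abs_le.1 h3
  rw [abs_le]
  constructor
  · have : (7:ℝ)/(b:ℝ)^3 = 2/(b:ℝ)^3 + 1/(b:ℝ)^3 + 4/(b:ℝ)^3 := by ring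
    rw [this]
    linarith
  · have : (7:ℝ)/(b:ℝ)^3 = 2/(b:ℝ)^3 + 1/(b:ℝ)^3 + 4/(b:ℝ)^3 := by ring
    rw [this]
    linarith
end

section
/- Let b ≥ 2 be an integer, E a nonempty set of base-b digits, A = {0,…,b−1} \ E, and N = #A. Then for every real number d and every integer m ≥ 1, (b^{m+1} − N)·v_m(d) = b^{m+1}·d^m + Σ_{j=1}^{m} C(m,j)·(Σ_{a∈A} (bd − a − d)^j)·v_{m−j}(d), where C(m,j) is the binomial coefficient; in particular v_0(d) = b/#E. -/
open MeasureTheory Real ENNReal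

section KVproof

namespace KV

variable (b : ℕ) (E : Finset ℕ)

abbrev Idx := {l : List ℕ // ∀ d ∈ l, d < b ∧ d ∉ E}

abbrev Dig := {a : ℕ // a ∈ Finset.range b \ E}

noncomputable def W (X : Idx b E) : ℝ := ((b : ℝ) ^ X.1.length)⁻¹

noncomputable def xv (X : Idx b E) : ℝ :=
  ((Nat.ofDigits b X.1 : ℕ) : ℝ) / (b : ℝ) ^ X.1.length

def e1 : List (Dig b E) ≃ Idx b E where
  toFun L := ⟨L.map Subtype.val, by
    intro d hd
    rw [List.mem_map] at hd
    obtain ⟨a, _, rfl⟩ := hd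
    have := a.2
    rw [Finset.mem_sdiff, Finset.mem_range] at this
    exact this⟩
  invFun X := X.1.pmap (fun a h => (⟨a, h⟩ : Dig b E))
    (fun a ha => by
      have := X.2 a ha
      rw [Finset.mem_sdiff, Finset.mem_range]
      exact this)
  left_inv L := by
    induction L with
    | nil => rfl
    | cons a t ih => simpa using congrArg (List.cons a) (by simpa using ih)
  right_inv X := by
    apply Subtype.ext
    simp [List.map_pmap]

lemma e1_length (L : List (Dig b E)) : ((e1 b E) L).1.length = L.length :=
  List.length_map _

/-- the master equiv -/
noncomputable def eS : (Σ n : ℕ, Fin n → Dig b E) ≃ Idx b E :=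
  List.equivSigmaTuple.symm.trans (e1 b E)

lemma eS_length (p : Σ n : ℕ, Fin n → Dig b E) : ((eS b E) p).1.length = p.1 := by
  obtain ⟨n, f⟩ := p
  show ((e1 b E) (List.equivSigmaTuple.symm ⟨n, f⟩)).1.length = n
  rw [e1_length]
  show (List.ofFn f).length = n
  simp

variable {b E}

lemma Ncard (hE : E.Nonempty) (hEsub : ∀ d ∈ E, d < b) :
    (Finset.range b \ E).card = b - E.card := by
  rw [Finset.card_sdiff_of_subset (fun d hd => Finset.mem_range.mpr (hEsub d hd)), Finset.card_range]

lemma Ecard_le (hEsub : ∀ d ∈ E, d < b) : E.card ≤ b := by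
  calc E.card ≤ (Finset.range b).card :=
        Finset.card_le_card (fun d hd => Finset.mem_range.mpr (hEsub d hd))
    _ = b := Finset.card_range b

lemma hasSum_W (hb : 2 ≤ b) (hE : E.Nonempty) (hEsub : ∀ d ∈ E, d < b) :
    HasSum (W b E) ((b : ℝ) / E.card) := by
  have hb0 : (0:ℝ) < b := by positivity
  set N : ℕ := (Finset.range b \ E).card with hN
  have hNlt : N < b := by
    rw [hN, Ncard hE hEsub]
    have h1 : 1 ≤ E.card := Finset.card_pos.mpr hE
    omega
  have hr0 : (0:ℝ) ≤ (N : ℝ) / b := by positivity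
  have hr1 : (N : ℝ) / b < 1 := by
    rw [div_lt_one hb0]
    exact_mod_cast hNlt
  -- summability and sum over the sigma type
  have hcard : Fintype.card (Dig b E) = N := Fintype.card_coe _
  have hfib : ∀ n : ℕ, ∑ _f : Fin n → Dig b E, ((b:ℝ) ^ n)⁻¹ = ((N:ℝ)/b) ^ n := by
    intro n
    rw [Finset.sum_const, Finset.card_univ, Fintype.card_fun]
    simp [hcard, div_pow, nsmul_eq_mul]
    rw [div_eq_mul_inv]
  have hsig : HasSum (fun p : Σ n : ℕ, Fin n → Dig b E => ((b:ℝ) ^ p.1)⁻¹)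
      ((b : ℝ) / E.card) := by
    have hsum : Summable (fun p : Σ n : ℕ, Fin n → Dig b E => ((b:ℝ) ^ p.1)⁻¹) := by
      rw [summable_sigma_of_nonneg (fun p => by positivity)]
      constructor
      · intro n; exact summable_of_finite_support (Set.toFinite _)
      · apply Summable.congr (summable_geometric_of_lt_one hr0 hr1)
        intro n
        rw [tsum_fintype, hfib]
    have : ∑' p : Σ n : ℕ, Fin n → Dig b E, ((b:ℝ) ^ p.1)⁻¹ = (b : ℝ) / E.card := by
      rw [Summable.tsum_sigma' (fun n => summable_of_finite_support (Set.toFinite _)) hsum]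
      have : ∀ n : ℕ, ∑' _f : Fin n → Dig b E, ((b:ℝ) ^ n)⁻¹ = ((N:ℝ)/b) ^ n := by
        intro n; rw [tsum_fintype, hfib]
      rw [tsum_congr this, tsum_geometric_of_lt_one hr0 hr1]
      have hcE : (N : ℝ) = (b : ℝ) - E.card := by
        rw [hN, Ncard hE hEsub]
        exact_mod_cast Nat.cast_sub (Ecard_le hEsub)
      have hE0 : (0:ℝ) < E.card := by
        exact_mod_cast Finset.card_pos.mpr hE
      rw [hcE]
      rw [show (1 : ℝ) - ((b : ℝ) - E.card)/b = E.card / b by field_simp; ring]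
      rw [inv_div]
    exact this ▸ hsum.hasSum
  have hcomp : (W b E) ∘ (eS b E) = fun p : Σ n : ℕ, Fin n → Dig b E => ((b:ℝ) ^ p.1)⁻¹ := by
    funext p
    show W b E ((eS b E) p) = _
    rw [W, eS_length]
  exact (Equiv.hasSum_iff (eS b E)).mp (hcomp ▸ hsig)


lemma xv_mem (hb : 2 ≤ b) (X : Idx b E) : xv b E X ∈ Set.Ico (0:ℝ) 1 := by
  have hb1 : 1 < b := hb
  have hpow : (0:ℝ) < (b:ℝ) ^ X.1.length := by positivity
  constructor
  · exact div_nonneg (by positivity) hpow.le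
  · rw [xv, div_lt_one hpow]
    have := Nat.ofDigits_lt_base_pow_length hb1 (fun x hx => (X.2 x hx).1)
    exact_mod_cast this

lemma W_pos (hb : 2 ≤ b) (X : Idx b E) : 0 < W b E X := by
  have : (0:ℝ) < (b:ℝ) := by positivity
  unfold W; positivity

/-- Master summability lemma. -/
lemma summable_WF (hb : 2 ≤ b) (hE : E.Nonempty) (hEsub : ∀ d ∈ E, d < b)
    {f : ℝ → ℝ} {C : ℝ} (hf : ∀ x ∈ Set.Ico (0:ℝ) 1, |f x| ≤ C) :
    Summable (fun X : Idx b E => W b E X * f (xv b E X)) := by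
  have hW := (hasSum_W hb hE hEsub).summable
  apply Summable.of_abs
  apply Summable.of_nonneg_of_le (fun X => abs_nonneg _)
    (f := fun X : Idx b E => W b E X * C)
  · intro X
    rw [abs_mul, abs_of_pos (W_pos hb X)]
    exact mul_le_mul_of_nonneg_left (hf _ (xv_mem hb X)) (W_pos hb X).le
  · exact hW.mul_right C

/-- ENNReal total mass finiteness. -/
lemma tsum_ennreal_W_ne_top (hb : 2 ≤ b) (hE : E.Nonempty) (hEsub : ∀ d ∈ E, d < b) :
    ∑' X : Idx b E, ((b : ℝ≥0∞) ^ X.1.length)⁻¹ ≠ ∞ := by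
  have hb0 : (0:ℝ) < b := by positivity
  have key : ∀ X : Idx b E, ((b : ℝ≥0∞) ^ X.1.length)⁻¹ = ENNReal.ofReal (W b E X) := by
    intro X
    rw [W, ENNReal.ofReal_inv_of_pos (by positivity), ENNReal.ofReal_pow hb0.le]
    norm_num
  rw [tsum_congr key, ← ENNReal.ofReal_tsum_of_nonneg (fun X => (W_pos hb X).le)
    (hasSum_W hb hE hEsub).summable]
  exact ENNReal.ofReal_ne_top

/-- The integral over the Kempner measure as a tsum. -/
lemma integral_eq_tsum (hb : 2 ≤ b) (hE : E.Nonempty) (hEsub : ∀ d ∈ E, d < b)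
    {f : ℝ → ℝ} (hfc : Continuous f) {C : ℝ} (hf : ∀ x ∈ Set.Ico (0:ℝ) 1, |f x| ≤ C) :
    ∫ x in Set.Ico (0:ℝ) 1, f x ∂(kempnerMeasure b E) =
      ∑' X : Idx b E, W b E X * f (xv b E X) := by
  classical
  have hb0 : (0:ℝ) < b := by positivity
  -- restrict the sum measure
  have hres : (kempnerMeasure b E).restrict (Set.Ico (0:ℝ) 1) =
      Measure.sum (fun X : Idx b E =>
        ((b : ℝ≥0∞) ^ X.1.length)⁻¹ • Measure.dirac (xv b E X)) := by
    rw [kempnerMeasure, Measure.restrict_sum_of_countable]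
    congr 1
    funext X
    rw [Measure.restrict_smul]
    congr 1
    have hx : ((Nat.ofDigits b X.1 : ℕ) : ℝ) / (b : ℝ) ^ X.1.length ∈ Set.Ico (0:ℝ) 1 :=
      xv_mem hb X
    rw [MeasureTheory.restrict_dirac' measurableSet_Ico, if_pos hx]
    rfl
  have hInt : MeasureTheory.Integrable f
      (Measure.sum (fun X : Idx b E =>
        ((b : ℝ≥0∞) ^ X.1.length)⁻¹ • Measure.dirac (xv b E X))) := by
    constructor
    · exact hfc.aestronglyMeasurable
    · rw [MeasureTheory.hasFiniteIntegral_iff_norm, MeasureTheory.lintegral_sum_measure]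
      have hC : ∀ X : Idx b E,
          ∫⁻ a, ENNReal.ofReal ‖f a‖ ∂(((b : ℝ≥0∞) ^ X.1.length)⁻¹ • Measure.dirac (xv b E X)) ≤
          ((b : ℝ≥0∞) ^ X.1.length)⁻¹ * ENNReal.ofReal C := by
        intro X
        rw [MeasureTheory.lintegral_smul_measure, MeasureTheory.lintegral_dirac]
        apply mul_le_mul_right
        apply ENNReal.ofReal_le_ofReal
        rw [Real.norm_eq_abs]
        exact hf _ (xv_mem hb X)
      calc ∑' X : Idx b E, ∫⁻ a, ENNReal.ofReal ‖f a‖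
            ∂(((b : ℝ≥0∞) ^ X.1.length)⁻¹ • Measure.dirac (xv b E X))
          ≤ ∑' X : Idx b E, ((b : ℝ≥0∞) ^ X.1.length)⁻¹ * ENNReal.ofReal C :=
            ENNReal.tsum_le_tsum hC
        _ = (∑' X : Idx b E, ((b : ℝ≥0∞) ^ X.1.length)⁻¹) * ENNReal.ofReal C :=
            ENNReal.tsum_mul_right
        _ < ∞ := ENNReal.mul_lt_top
            (tsum_ennreal_W_ne_top hb hE hEsub).lt_top ENNReal.ofReal_lt_top
  rw [show (∫ x in Set.Ico (0:ℝ) 1, f x ∂(kempnerMeasure b E)) =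
      ∫ x, f x ∂((kempnerMeasure b E).restrict (Set.Ico (0:ℝ) 1)) from rfl, hres,
    MeasureTheory.integral_sum_measure hInt]
  apply tsum_congr
  intro X
  rw [MeasureTheory.integral_smul_measure, MeasureTheory.integral_dirac]
  congr 1
  rw [W]
  rw [ENNReal.toReal_inv]
  norm_num

variable (b E) in
def X0 : Idx b E := ⟨[], by simp⟩

variable (b E) in
def app (p : Idx b E × Dig b E) : Idx b E :=
  ⟨p.1.1 ++ [p.2.1], by
    intro d hd
    rcases List.mem_append.mp hd with h | h
    · exact p.1.2 d h
    · rw [List.mem_singleton] at h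
      subst h
      have := p.2.2
      rw [Finset.mem_sdiff, Finset.mem_range] at this
      exact this⟩

lemma app_ne (p : Idx b E × Dig b E) : app b E p ≠ X0 b E := by
  intro h
  have := congrArg (fun X : Idx b E => X.1.length) h
  simp [app, X0] at this

lemma app_inj : Function.Injective (app b E) := by
  rintro ⟨⟨l1, h1⟩, ⟨a1, ha1⟩⟩ ⟨⟨l2, h2⟩, ⟨a2, ha2⟩⟩ h
  have h' : l1 ++ [a1] = l2 ++ [a2] := congrArg Subtype.val h
  have hlen : ([a1] : List ℕ).length = ([a2] : List ℕ).length := rfl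
  obtain ⟨hl, ha⟩ := List.append_inj' h' hlen
  simp only [List.cons.injEq] at ha
  simp [Prod.ext_iff, Subtype.ext_iff, hl, ha.1]

lemma app_surj_on {X : Idx b E} (hX : X.1 ≠ []) : X ∈ Set.range (app b E) := by
  refine ⟨(⟨X.1.dropLast, fun d hd => X.2 d (List.mem_of_mem_dropLast hd)⟩,
    ⟨X.1.getLast hX, ?_⟩), ?_⟩
  · have := X.2 _ (List.getLast_mem hX)
    rw [Finset.mem_sdiff, Finset.mem_range]
    exact this
  · exact Subtype.ext (List.dropLast_append_getLast hX)

lemma W_app (hb : 2 ≤ b) (p : Idx b E × Dig b E) :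
    W b E (app b E p) = (b : ℝ)⁻¹ * W b E p.1 := by
  have hb0 : (0:ℝ) < b := by positivity
  rw [W, W, app]
  simp only [List.length_append, List.length_singleton]
  rw [pow_succ, mul_inv, mul_comm]

lemma xv_app (hb : 2 ≤ b) (p : Idx b E × Dig b E) :
    xv b E (app b E p) = (xv b E p.1 + (p.2.1 : ℝ)) / b := by
  have hb0 : (0:ℝ) < b := by positivity
  obtain ⟨⟨l, hl⟩, ⟨a, ha⟩⟩ := p
  show ((Nat.ofDigits b (l ++ [a]) : ℕ) : ℝ) / (b:ℝ) ^ (l ++ [a]).length = _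
  rw [Nat.ofDigits_append]
  simp only [List.length_append, List.length_singleton, Nat.ofDigits_singleton]
  push_cast
  rw [xv]
  have hpow : (0:ℝ) < (b:ℝ) ^ l.length := by positivity
  field_simp
  rw [Nat.coe_ofDigits]
  ring

/-- The self-similarity functional equation. -/
lemma funeq (hb : 2 ≤ b) (hE : E.Nonempty) (hEsub : ∀ d ∈ E, d < b)
    {f : ℝ → ℝ} {C : ℝ} (hf : ∀ x ∈ Set.Ico (0:ℝ) 1, |f x| ≤ C) :
    ∑' X : Idx b E, W b E X * f (xv b E X) =
      f 0 + (b:ℝ)⁻¹ * ∑ a ∈ Finset.range b \ E,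
        ∑' X : Idx b E, W b E X * f ((xv b E X + (a:ℝ)) / b) := by
  classical
  set G : Idx b E → ℝ := fun X => W b E X * f (xv b E X) with hGdef
  have hG : Summable G := summable_WF hb hE hEsub hf
  have hG0 : G (X0 b E) = f 0 := by
    rw [hGdef]
    show W b E (X0 b E) * f (xv b E (X0 b E)) = f 0
    have h1 : W b E (X0 b E) = 1 := by rw [W]; simp [X0]
    have h2 : xv b E (X0 b E) = 0 := by rw [xv]; simp [X0]
    rw [h1, h2, one_mul]
  rw [Summable.tsum_eq_add_tsum_ite hG (X0 b E), hG0]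
  congr 1
  -- remainder sum equals sum over appended strings
  have hsupp : Function.support (fun X => if X = X0 b E then 0 else G X) ⊆
      Set.range (app b E) := by
    intro X hX
    have hX' : (if X = X0 b E then 0 else G X) ≠ 0 := hX
    have hne : X ≠ X0 b E := by
      intro h; rw [if_pos h] at hX'; exact hX' rfl
    apply app_surj_on
    intro h
    exact hne (Subtype.ext h)
  have key := (app_inj (b := b) (E := E)).tsum_eq hsupp
  have hpt : ∀ p : Idx b E × Dig b E,
      (if app b E p = X0 b E then 0 else G (app b E p)) = G (app b E p) := by
    intro p; rw [if_neg (app_ne p)]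
  rw [← key, tsum_congr hpt]
  -- each term
  have hterm : ∀ p : Idx b E × Dig b E, G (app b E p) =
      (b:ℝ)⁻¹ * (W b E p.1 * f ((xv b E p.1 + (p.2.1 : ℝ)) / b)) := by
    intro p
    rw [hGdef]
    show W b E (app b E p) * f (xv b E (app b E p)) = _
    rw [W_app hb, xv_app hb]
    ring
  rw [tsum_congr hterm]
  -- flip the product and sum over digits
  have hFs : Summable (fun p : Idx b E × Dig b E =>
      (b:ℝ)⁻¹ * (W b E p.1 * f ((xv b E p.1 + (p.2.1 : ℝ)) / b))) := by
    have hG2 : Summable (fun X => if X = X0 b E then 0 else G X) := by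
      have := hG.update (X0 b E) 0
      apply this.congr
      intro X
      rw [Function.update_apply]
    have hzero : ∀ X ∉ Set.range (app b E), (if X = X0 b E then 0 else G X) = 0 := by
      intro X hX
      by_contra h
      exact hX (hsupp h)
    have := (app_inj (b := b) (E := E)).summable_iff hzero |>.mpr hG2
    apply this.congr
    intro p
    rw [Function.comp_apply] at *
    rw [hpt p, hterm p]
  have hswap := Equiv.tsum_eq (Equiv.prodComm (Dig b E) (Idx b E))
    (fun p : Idx b E × Dig b E =>
      (b:ℝ)⁻¹ * (W b E p.1 * f ((xv b E p.1 + (p.2.1 : ℝ)) / b)))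
  rw [← hswap]
  have hFs' : Summable (fun q : Dig b E × Idx b E =>
      (b:ℝ)⁻¹ * (W b E q.2 * f ((xv b E q.2 + (q.1.1 : ℝ)) / b))) :=
    (Equiv.summable_iff (Equiv.prodComm (Dig b E) (Idx b E))).mpr hFs
  rw [show (fun q : Dig b E × Idx b E =>
      (b:ℝ)⁻¹ * (W b E ((Equiv.prodComm (Dig b E) (Idx b E)) q).1 *
        f ((xv b E ((Equiv.prodComm (Dig b E) (Idx b E)) q).1 +
          ((((Equiv.prodComm (Dig b E) (Idx b E)) q).2).1 : ℝ)) / b))) =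
    (fun q : Dig b E × Idx b E =>
      (b:ℝ)⁻¹ * (W b E q.2 * f ((xv b E q.2 + (q.1.1 : ℝ)) / b))) from rfl]
  rw [Summable.tsum_prod hFs']
  rw [tsum_fintype]
  rw [← Finset.sum_coe_sort (Finset.range b \ E)
    (fun a => ∑' X : Idx b E, W b E X * f ((xv b E X + (a:ℝ)) / b))]
  rw [Finset.mul_sum]
  apply Finset.sum_congr rfl
  intro a _
  rw [← tsum_mul_left]

lemma bound_pow (d : ℝ) (k : ℕ) : ∀ x ∈ Set.Ico (0:ℝ) 1, |(d - x)^k| ≤ (|d| + 1)^k := by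
  intro x hx
  rw [abs_pow]
  apply pow_le_pow_left₀ (abs_nonneg _) _ k
  have h1 : |x| ≤ 1 := by rw [abs_of_nonneg hx.1]; exact hx.2.le
  calc |d - x| = |d + (-x)| := by ring_nf
    _ ≤ |d| + |(-x)| := abs_add_le _ _
    _ = |d| + |x| := by rw [abs_neg]
    _ ≤ |d| + 1 := by linarith

lemma vMoment_eq_tsum (hb : 2 ≤ b) (hE : E.Nonempty) (hEsub : ∀ d ∈ E, d < b)
    (k : ℕ) (d : ℝ) :
    vMoment b E k d = ∑' X : Idx b E, W b E X * (d - xv b E X)^k := by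
  rw [vMoment]
  exact integral_eq_tsum hb hE hEsub ((continuous_const.sub continuous_id).pow k)
    (bound_pow d k)

lemma vMoment_zero (hb : 2 ≤ b) (hE : E.Nonempty) (hEsub : ∀ d ∈ E, d < b) (d : ℝ) :
    vMoment b E 0 d = (b : ℝ) / E.card := by
  rw [vMoment_eq_tsum hb hE hEsub 0 d]
  rw [tsum_congr (fun X : Idx b E => by rw [pow_zero, mul_one])]
  exact (hasSum_W hb hE hEsub).tsum_eq

lemma vMoment_rec (hb : 2 ≤ b) (hE : E.Nonempty) (hEsub : ∀ d ∈ E, d < b)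
    (d : ℝ) (m : ℕ) (hm : 1 ≤ m) :
    ((b : ℝ) ^ (m + 1) - ((Finset.range b \ E).card : ℝ)) * vMoment b E m d =
      (b : ℝ) ^ (m + 1) * d ^ m +
      ∑ j ∈ Finset.Icc 1 m, (m.choose j : ℝ) *
        (∑ a ∈ Finset.range b \ E, ((b : ℝ) * d - (a : ℝ) - d) ^ j) *
        vMoment b E (m - j) d := by
  have hb0 : (0:ℝ) < b := by positivity
  have hbne : (b:ℝ) ≠ 0 := hb0.ne'
  have hfun := funeq hb hE hEsub (f := fun x => (d - x)^m) (C := (|d| + 1)^m)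
    (bound_pow d m)
  -- inner sums : expand via binomial
  have hinner : ∀ a ∈ Finset.range b \ E,
      (∑' X : Idx b E, W b E X * (d - (xv b E X + (a:ℝ)) / b)^m) =
      ∑ j ∈ Finset.range (m+1),
        ((b:ℝ)^m)⁻¹ * ((b:ℝ) * d - (a:ℝ) - d)^j * (m.choose j : ℝ) *
          vMoment b E (m - j) d := by
    intro a _
    have hpt : ∀ X : Idx b E, W b E X * (d - (xv b E X + (a:ℝ)) / b)^m =
        ∑ j ∈ Finset.range (m+1),
          ((b:ℝ)^m)⁻¹ * ((b:ℝ) * d - (a:ℝ) - d)^j * (m.choose j : ℝ) *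
            (W b E X * (d - xv b E X)^(m - j)) := by
      intro X
      have hx : d - (xv b E X + (a:ℝ)) / b =
          (((b:ℝ) * d - (a:ℝ) - d) + (d - xv b E X)) / b := by
        field_simp
        ring
      rw [hx, div_pow, add_pow]
      rw [Finset.sum_div, Finset.mul_sum]
      apply Finset.sum_congr rfl
      intro j hj
      ring
    rw [tsum_congr hpt, Summable.tsum_finsetSum (fun j _ =>
      (summable_WF hb hE hEsub (bound_pow d (m - j))).mul_left _)]
    apply Finset.sum_congr rfl
    intro j hj
    rw [tsum_mul_left, ← vMoment_eq_tsum hb hE hEsub (m - j) d]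
  rw [Finset.sum_congr rfl hinner, Finset.sum_comm] at hfun
  -- split off the j = 0 term
  have hsplit : Finset.range (m+1) = insert 0 (Finset.Icc 1 m) := by
    ext x
    simp only [Finset.mem_range, Finset.mem_insert, Finset.mem_Icc]
    omega
  rw [hsplit, Finset.sum_insert (by simp)] at hfun
  have h0 : (∑ a ∈ Finset.range b \ E,
      ((b:ℝ)^m)⁻¹ * ((b:ℝ) * d - (a:ℝ) - d)^0 * (m.choose 0 : ℝ) *
        vMoment b E (m - 0) d) =
      (((Finset.range b \ E).card : ℝ)) * (((b:ℝ)^m)⁻¹ * vMoment b E m d) := by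
    calc (∑ a ∈ Finset.range b \ E,
        ((b:ℝ)^m)⁻¹ * ((b:ℝ) * d - (a:ℝ) - d)^0 * (m.choose 0 : ℝ) *
          vMoment b E (m - 0) d)
        = ∑ _a ∈ Finset.range b \ E, (((b:ℝ)^m)⁻¹ * vMoment b E m d) :=
          Finset.sum_congr rfl (fun a _ => by norm_num)
      _ = ((Finset.range b \ E).card : ℝ) * (((b:ℝ)^m)⁻¹ * vMoment b E m d) := by
          rw [Finset.sum_const, nsmul_eq_mul]
  rw [h0] at hfun
  have hj : ∀ j ∈ Finset.Icc 1 m, (∑ a ∈ Finset.range b \ E,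
      ((b:ℝ)^m)⁻¹ * ((b:ℝ) * d - (a:ℝ) - d)^j * (m.choose j : ℝ) *
        vMoment b E (m - j) d) =
      ((b:ℝ)^m)⁻¹ * ((m.choose j : ℝ) *
        (∑ a ∈ Finset.range b \ E, ((b : ℝ) * d - (a : ℝ) - d) ^ j) *
        vMoment b E (m - j) d) := by
    intro j _
    calc (∑ a ∈ Finset.range b \ E,
        ((b:ℝ)^m)⁻¹ * ((b:ℝ) * d - (a:ℝ) - d)^j * (m.choose j : ℝ) *
          vMoment b E (m - j) d)
        = ∑ a ∈ Finset.range b \ E, ((b:ℝ) * d - (a:ℝ) - d)^j *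
            (((b:ℝ)^m)⁻¹ * (m.choose j : ℝ) * vMoment b E (m - j) d) :=
          Finset.sum_congr rfl (fun a _ => by ring)
      _ = (∑ a ∈ Finset.range b \ E, ((b:ℝ) * d - (a:ℝ) - d)^j) *
            (((b:ℝ)^m)⁻¹ * (m.choose j : ℝ) * vMoment b E (m - j) d) := by
          rw [← Finset.sum_mul]
      _ = _ := by ring
  rw [Finset.sum_congr rfl hj, ← Finset.mul_sum] at hfun
  simp only [sub_zero] at hfun
  rw [← vMoment_eq_tsum hb hE hEsub m d] at hfun
  -- hfun : vMoment m = d^m + b⁻¹ * (N * ((b^m)⁻¹ * v m) + (b^m)⁻¹ * P)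
  have hkey : (b:ℝ)^(m+1) * vMoment b E m d = (b:ℝ)^(m+1) * d^m +
      (((Finset.range b \ E).card : ℝ) * vMoment b E m d +
        ∑ j ∈ Finset.Icc 1 m, (m.choose j : ℝ) *
          (∑ a ∈ Finset.range b \ E, ((b : ℝ) * d - (a : ℝ) - d) ^ j) *
          vMoment b E (m - j) d) := by
    calc (b:ℝ)^(m+1) * vMoment b E m d
        = (b:ℝ)^(m+1) * (d^m + (b:ℝ)⁻¹ *
            (((Finset.range b \ E).card : ℝ) * (((b:ℝ)^m)⁻¹ * vMoment b E m d) +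
              ((b:ℝ)^m)⁻¹ * ∑ j ∈ Finset.Icc 1 m, (m.choose j : ℝ) *
                (∑ a ∈ Finset.range b \ E, ((b : ℝ) * d - (a : ℝ) - d) ^ j) *
                vMoment b E (m - j) d)) := by rw [← hfun]
      _ = _ := by
          rw [pow_succ]
          field_simp
  linear_combination hkey

end KV


end KVproof

theorem vMoment_recurrence_one (b : ℕ) (hb : 2 ≤ b) (E : Finset ℕ)
    (hE : E.Nonempty) (hEsub : ∀ d ∈ E, d < b) :
    (∀ d : ℝ, ∀ m : ℕ, 1 ≤ m →
      ((b : ℝ) ^ (m + 1) - ((Finset.range b \ E).card : ℝ)) * vMoment b E m d =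
        (b : ℝ) ^ (m + 1) * d ^ m +
        ∑ j ∈ Finset.Icc 1 m, (m.choose j : ℝ) *
          (∑ a ∈ Finset.range b \ E, ((b : ℝ) * d - (a : ℝ) - d) ^ j) *
          vMoment b E (m - j) d) ∧
    (∀ d : ℝ, vMoment b E 0 d = (b : ℝ) / E.card) :=
  ⟨fun d m hm => KV.vMoment_rec hb hE hEsub d m hm,
   fun d => KV.vMoment_zero hb hE hEsub d⟩
end

section
/- Let b ≥ 2 be an integer, E a nonempty set of base-b digits, A = {0,…,b−1} \ E, and N = #A. Then for every real number d and every integer m ≥ 1, (m+1)·(b^{m+1} − N)·v_m(d) = b·((db+1)^{m+1} − (db)^{m+1}) − Σ_{j=1}^{m} C(m+1, j+1)·( b^{m+1−j} − (bd+1−d)^{j+1} + (b−1)^{j+1}(d−1)^{j+1} + Σ_{a∈E} ((bd−a−d+1)^{j+1} − (bd−a−d)^{j+1}) )·v_{m−j}(d), where C(m+1,j+1) is the binomial coefficient. -/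
open MeasureTheory Real ENNReal

abbrev KS (b : ℕ) (E : Finset ℕ) := {l : List ℕ // ∀ d ∈ l, d < b ∧ d ∉ E}

noncomputable def kw (b : ℕ) (E : Finset ℕ) (X : KS b E) : ℝ := ((b : ℝ) ^ X.1.length)⁻¹

noncomputable def kpt (b : ℕ) (E : Finset ℕ) (X : KS b E) : ℝ :=
  ((Nat.ofDigits b X.1 : ℕ) : ℝ) / (b : ℝ) ^ X.1.length

variable {b : ℕ} {E : Finset ℕ}

lemma hBpos (hb : 2 ≤ b) : (0:ℝ) < (b:ℝ) := by
  have : 0 < b := by omega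
  exact_mod_cast this

lemma kw_pos (hb : 2 ≤ b) (X : KS b E) : 0 < kw b E X := by
  have h := hBpos hb
  unfold kw; positivity

lemma kpt_mem (hb : 2 ≤ b) (X : KS b E) : kpt b E X ∈ Set.Ico (0:ℝ) 1 := by
  have hb1 : 1 < b := hb
  have h0 := hBpos hb
  have hpow : (0:ℝ) < (b:ℝ) ^ X.1.length := by positivity
  constructor
  · unfold kpt; positivity
  · unfold kpt
    rw [div_lt_one hpow]
    have h := Nat.ofDigits_lt_base_pow_length hb1 (fun x hx => (X.2 x hx).1)
    exact_mod_cast h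

def kslistEquiv (b : ℕ) (E : Finset ℕ) : KS b E ≃ List {a : ℕ // a ∈ Finset.range b \ E} where
  toFun X := X.1.pmap (fun d hd => (⟨d, Finset.mem_sdiff.mpr ⟨Finset.mem_range.mpr hd.1, hd.2⟩⟩ :
      {a : ℕ // a ∈ Finset.range b \ E})) X.2
  invFun L := ⟨L.map Subtype.val, by
    intro d hd
    simp only [List.mem_map] at hd
    obtain ⟨a, _, rfl⟩ := hd
    have := Finset.mem_sdiff.mp a.2
    exact ⟨Finset.mem_range.mp this.1, this.2⟩⟩
  left_inv X := by
    ext1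
    simp [List.map_pmap]
  right_inv L := by
    induction L with
    | nil => rfl
    | cons a L ih =>
      simp only [List.map_cons, List.pmap]
      simp only [Subtype.coe_eta]
      exact congrArg (List.cons a) ih

lemma summable_kw (hb : 2 ≤ b) (hE : E.Nonempty) (hEsub : ∀ d ∈ E, d < b) :
    Summable (kw b E) := by
  classical
  set β := {a : ℕ // a ∈ Finset.range b \ E} with hβ
  have hcard : (Fintype.card β : ℝ) * ((b:ℝ))⁻¹ < 1 := by
    have h1 : Fintype.card β = (Finset.range b \ E).card := Fintype.card_coe _
    have h2 : (Finset.range b \ E).card < b := by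
      have hsub : E ⊆ Finset.range b := fun a ha => Finset.mem_range.mpr (hEsub a ha)
      have := Finset.card_sdiff_of_subset hsub
      rw [this, Finset.card_range]
      obtain ⟨e, he⟩ := hE
      have : 0 < E.card := Finset.card_pos.mpr ⟨e, he⟩
      omega
    rw [h1]
    rw [mul_inv_lt_iff₀ (hBpos hb), one_mul]
    exact_mod_cast h2
  have key : Summable (fun L : List β => ((b:ℝ))⁻¹ ^ L.length) := by
    have h2 : Summable (fun x : (Σ n, Fin n → β) => ((b:ℝ))⁻¹ ^ x.1) := by
      apply (summable_sigma_of_nonneg ?_).mpr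
      · constructor
        · intro n; exact Summable.of_finite
        · have heval : ∀ n : ℕ, (∑' _ : Fin n → β, ((b:ℝ))⁻¹ ^ n)
              = ((Fintype.card β : ℝ) * ((b:ℝ))⁻¹) ^ n := by
            intro n
            rw [tsum_fintype]
            rw [Finset.sum_const, Finset.card_univ, Fintype.card_fun, mul_pow]
            simp [nsmul_eq_mul]
          simp_rw [heval]
          apply summable_geometric_of_lt_one ?_ hcard
          have := hBpos hb
          positivity
      · intro x; positivity
    have := (Equiv.summable_iff (List.equivSigmaTuple (α := β)).symm
      (f := fun L : List β => ((b:ℝ))⁻¹ ^ L.length)).mp ?_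
    · exact this
    · have hfun : ((fun L : List β => ((b:ℝ))⁻¹ ^ L.length) ∘ (List.equivSigmaTuple (α := β)).symm)
          = fun x : (Σ n, Fin n → β) => ((b:ℝ))⁻¹ ^ x.1 := by
        funext x
        show ((b:ℝ))⁻¹ ^ (List.ofFn x.2).length = _
        rw [List.length_ofFn]
      rw [hfun]
      exact h2
  have := (Equiv.summable_iff (kslistEquiv b E).symm (f := kw b E)).mp ?_
  · exact this
  · have hfun : (kw b E ∘ (kslistEquiv b E).symm) = fun L : List β => ((b:ℝ))⁻¹ ^ L.length := by
      funext L
      show ((b:ℝ) ^ (L.map Subtype.val).length)⁻¹ = _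
      rw [List.length_map, inv_pow]
    rw [hfun]
    exact key

lemma summable_main (hb : 2 ≤ b) (hE : E.Nonempty) (hEsub : ∀ d ∈ E, d < b) (c : ℝ) (n : ℕ) :
    Summable (fun X : KS b E => kw b E X * (c - kpt b E X) ^ n) := by
  apply Summable.of_norm_bounded (g := fun X => (|c| + 1) ^ n * kw b E X)
    (((summable_kw hb hE hEsub)).mul_left _)
  intro X
  rw [norm_mul, norm_pow]
  have hw := (kw_pos hb X).le
  have hpt := kpt_mem hb X
  have h1 : ‖c - kpt b E X‖ ≤ |c| + 1 := by
    rw [Real.norm_eq_abs]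
    have := abs_sub_abs_le_abs_sub c (kpt b E X)
    have h2 : |kpt b E X| ≤ 1 := by
      rw [abs_le]; constructor <;> [linarith [hpt.1]; linarith [hpt.2]]
    calc |c - kpt b E X| ≤ |c| + |kpt b E X| := abs_sub c (kpt b E X)
      _ ≤ |c| + 1 := by linarith
  calc ‖kw b E X‖ * ‖c - kpt b E X‖ ^ n ≤ ‖kw b E X‖ * (|c| + 1) ^ n := by
        apply mul_le_mul_of_nonneg_left (pow_le_pow_left₀ (norm_nonneg _) h1 n) (norm_nonneg _)
    _ = (|c| + 1) ^ n * kw b E X := by rw [Real.norm_eq_abs, abs_of_nonneg hw]; ring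

noncomputable def WW (b : ℕ) (E : Finset ℕ) (n : ℕ) (c : ℝ) : ℝ :=
  ∑' X : KS b E, kw b E X * (c - kpt b E X) ^ n

lemma vMoment_eq_WW (hb : 2 ≤ b) (hE : E.Nonempty) (hEsub : ∀ d ∈ E, d < b) (n : ℕ) (d : ℝ) :
    vMoment b E n d = WW b E n d := by
  classical
  have hb0 := hBpos hb
  set f : ℝ → ℝ := fun x => (d - x) ^ n with hf
  have hcont : Continuous f := by fun_prop
  set s : Set ℝ := Set.Ico 0 1 with hs'
  have hs : MeasurableSet s := measurableSet_Ico
  set ν : KS b E → Measure ℝ := fun X =>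
    (((b : ℝ≥0∞) ^ X.1.length)⁻¹ • Measure.dirac (kpt b E X)).restrict s with hν
  have hres : (kempnerMeasure b E).restrict s = Measure.sum ν := by
    rw [kempnerMeasure, Measure.restrict_sum _ hs]
    rfl
  have hcoe : ∀ X : KS b E, ((b : ℝ≥0∞) ^ X.1.length)⁻¹ = ENNReal.ofReal (kw b E X) := by
    intro X
    rw [kw, ← ENNReal.ofReal_natCast b, ← ENNReal.ofReal_pow (by positivity),
      ← ENNReal.ofReal_inv_of_pos (by positivity)]
  have hmass : (∑' X : KS b E, ENNReal.ofReal (kw b E X)) ≠ ⊤ := by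
    rw [← ENNReal.ofReal_tsum_of_nonneg (fun X => (kw_pos hb X).le) (summable_kw hb hE hEsub)]
    exact ENNReal.ofReal_ne_top
  have hint : Integrable f (Measure.sum ν) := by
    constructor
    · exact hcont.aestronglyMeasurable
    · rw [HasFiniteIntegral, lintegral_sum_measure]
      have hbd : ∀ X : KS b E, ∫⁻ a, ‖f a‖₊ ∂(ν X)
          ≤ ENNReal.ofReal ((|d| + 1) ^ n) * ENNReal.ofReal (kw b E X) := by
        intro X
        calc ∫⁻ a, ‖f a‖₊ ∂(ν X)
            ≤ ∫⁻ a, ‖f a‖₊ ∂(((b : ℝ≥0∞) ^ X.1.length)⁻¹ • Measure.dirac (kpt b E X)) := by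
              apply lintegral_mono' Measure.restrict_le_self le_rfl
          _ = ((b : ℝ≥0∞) ^ X.1.length)⁻¹ * ∫⁻ a, ‖f a‖₊ ∂(Measure.dirac (kpt b E X)) := by
              rw [lintegral_smul_measure, smul_eq_mul]
          _ = ((b : ℝ≥0∞) ^ X.1.length)⁻¹ * ‖f (kpt b E X)‖₊ := by
              rw [lintegral_dirac]
          _ ≤ ENNReal.ofReal ((|d| + 1) ^ n) * ENNReal.ofReal (kw b E X) := by
              rw [hcoe X, mul_comm]
              apply mul_le_mul_left
              rw [← enorm_eq_nnnorm, ← ofReal_norm]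
              apply ENNReal.ofReal_le_ofReal
              have hpt := kpt_mem hb X
              rw [hf]
              simp only [norm_pow, Real.norm_eq_abs]
              apply pow_le_pow_left₀ (abs_nonneg _)
              calc |d - kpt b E X| ≤ |d| + |kpt b E X| := abs_sub d _
                _ ≤ |d| + 1 := by
                    have h2 : |kpt b E X| ≤ 1 := by
                      rw [abs_le]; constructor <;> [linarith [hpt.1]; linarith [hpt.2]]
                    linarith
      calc ∑' X : KS b E, ∫⁻ a, ‖f a‖₊ ∂(ν X)
          ≤ ∑' X : KS b E, ENNReal.ofReal ((|d| + 1) ^ n) * ENNReal.ofReal (kw b E X) :=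
            ENNReal.tsum_le_tsum hbd
        _ = ENNReal.ofReal ((|d| + 1) ^ n) * ∑' X : KS b E, ENNReal.ofReal (kw b E X) :=
            ENNReal.tsum_mul_left
        _ < ⊤ := ENNReal.mul_lt_top ENNReal.ofReal_lt_top hmass.lt_top
  have hτ : ∀ X : KS b E, ∫ x, f x ∂(ν X) = kw b E X * f (kpt b E X) := by
    intro X
    rw [hν]
    simp only
    rw [Measure.restrict_smul, integral_smul_measure, setIntegral_dirac f _ s,
      if_pos (kpt_mem hb X)]
    have : (((b : ℝ≥0∞) ^ X.1.length)⁻¹).toReal = kw b E X := by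
      rw [ENNReal.toReal_inv, ENNReal.toReal_pow]
      simp [kw]
    rw [this, smul_eq_mul]
  calc vMoment b E n d = ∫ x, f x ∂((kempnerMeasure b E).restrict s) := rfl
    _ = ∫ x, f x ∂(Measure.sum ν) := by rw [hres]
    _ = ∑' X : KS b E, ∫ x, f x ∂(ν X) := integral_sum_measure hint
    _ = ∑' X : KS b E, kw b E X * (d - kpt b E X) ^ n := by
        apply tsum_congr; intro X; rw [hτ X]
    _ = WW b E n d := rfl

lemma WW_shift (hb : 2 ≤ b) (hE : E.Nonempty) (hEsub : ∀ d ∈ E, d < b) (n : ℕ) (c d : ℝ) :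
    WW b E n c = ∑ i ∈ Finset.range (n + 1),
      (n.choose i : ℝ) * (c - d) ^ i * WW b E (n - i) d := by
  have h1 : ∀ X : KS b E, kw b E X * (c - kpt b E X) ^ n
      = ∑ i ∈ Finset.range (n + 1),
        (n.choose i : ℝ) * (c - d) ^ i * (kw b E X * (d - kpt b E X) ^ (n - i)) := by
    intro X
    have : c - kpt b E X = (c - d) + (d - kpt b E X) := by ring
    rw [this, add_pow, Finset.mul_sum]
    apply Finset.sum_congr rfl
    intro i _
    ring
  rw [WW]
  rw [tsum_congr h1]
  rw [Summable.tsum_finsetSum (fun i _ => ((summable_main hb hE hEsub d (n - i)).mul_left _))]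
  apply Finset.sum_congr rfl
  intro i _
  rw [tsum_mul_left]
  rfl

lemma WW_selfsim (hb : 2 ≤ b) (hE : E.Nonempty) (hEsub : ∀ d ∈ E, d < b) (n : ℕ) (c : ℝ) :
    WW b E n c = c ^ n + ((b:ℝ) ^ (n+1))⁻¹ *
      ∑ a ∈ Finset.range b \ E, WW b E n ((b:ℝ) * c - (a:ℝ)) := by
  classical
  have hb0 := hBpos hb
  set A : Finset ℕ := Finset.range b \ E with hA
  set F : KS b E → ℝ := fun X => kw b E X * (c - kpt b E X) ^ n with hF
  have hf : Summable F := summable_main hb hE hEsub c n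
  set X₀ : KS b E := ⟨[], by simp⟩ with hX₀
  set j : ↥A × KS b E → KS b E := fun p => ⟨p.2.1 ++ [p.1.1], by
    intro x hx
    rcases List.mem_append.mp hx with h | h
    · exact p.2.2 x h
    · have hx' : x = p.1.1 := by simpa using h
      subst hx'
      have := Finset.mem_sdiff.mp p.1.2
      exact ⟨Finset.mem_range.mp this.1, this.2⟩⟩ with hj
  have hjinj : Function.Injective j := by
    intro p q h
    have h' : p.2.1 ++ [p.1.1] = q.2.1 ++ [q.1.1] := congrArg Subtype.val h
    obtain ⟨h1, h2⟩ := List.append_inj' h' (by simp)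
    exact Prod.ext (Subtype.ext (by simpa using h2)) (Subtype.ext h1)
  have hjne : ∀ p, j p ≠ X₀ := by
    intro p hp
    have : p.2.1 ++ [p.1.1] = [] := congrArg Subtype.val hp
    simpa using this
  -- key pointwise formula
  have hstep : ∀ p : ↥A × KS b E, F (j p)
      = ((b:ℝ) ^ (n+1))⁻¹ * (kw b E p.2 * (((b:ℝ) * c - (p.1.1 : ℝ)) - kpt b E p.2) ^ n) := by
    intro p
    obtain ⟨⟨a, ha⟩, X⟩ := p
    have hlen : (j (⟨a, ha⟩, X)).1.length = X.1.length + 1 := by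
      simp [hj]
    have hdig : ((Nat.ofDigits b (j (⟨a, ha⟩, X)).1 : ℕ) : ℝ)
        = ((Nat.ofDigits b X.1 : ℕ) : ℝ) + (b:ℝ) ^ X.1.length * (a : ℝ) := by
      have : Nat.ofDigits b (X.1 ++ [a]) = Nat.ofDigits b X.1 + b ^ X.1.length * a := by
        rw [Nat.ofDigits_append, Nat.ofDigits_singleton]
      have h2 : (j (⟨a, ha⟩, X)).1 = X.1 ++ [a] := rfl
      rw [h2, this]
      push_cast
      ring
    have hL : (0:ℝ) < (b:ℝ) ^ X.1.length := by positivity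
    have hbase : c - kpt b E (j (⟨a, ha⟩, X))
        = (((b:ℝ) * c - (a:ℝ)) - kpt b E X) / (b:ℝ) := by
      rw [kpt, kpt, hdig, hlen]
      rw [pow_succ]
      field_simp
      ring
    rw [hF]
    simp only
    rw [hbase, div_pow, kw, kw, hlen, pow_succ]
    rw [div_eq_mul_inv, mul_inv, pow_succ, mul_inv]
    ring
  -- summability of F ∘ j
  have hsum_j : Summable (fun p => F (j p)) := by
    apply Summable.of_norm_bounded
      (g := fun p : ↥A × KS b E => (((b:ℝ) ^ (n+1))⁻¹ * ((b:ℝ) * |c| + (b:ℝ) + 1) ^ n) * kw b E p.2)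
    · exact Summable.mul_of_nonneg (f := fun _ : ↥A => ((b:ℝ) ^ (n+1))⁻¹ * ((b:ℝ) * |c| + (b:ℝ) + 1) ^ n)
        (g := kw b E) Summable.of_finite (summable_kw hb hE hEsub)
        (fun _ => by positivity) (fun X => (kw_pos hb X).le)
    · intro p
      show ‖F (j p)‖ ≤ _
      rw [hstep p, norm_mul, norm_mul, norm_pow]
      have hw := (kw_pos hb p.2).le
      have hpt := kpt_mem hb p.2
      have ha : (p.1.1 : ℝ) < b := by
        have := Finset.mem_sdiff.mp p.1.2
        exact_mod_cast Finset.mem_range.mp this.1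
      have ha0 : (0:ℝ) ≤ (p.1.1 : ℝ) := by positivity
      have h1 : ‖((b:ℝ) * c - (p.1.1:ℝ)) - kpt b E p.2‖ ≤ (b:ℝ) * |c| + (b:ℝ) + 1 := by
        rw [Real.norm_eq_abs]
        have h2 : |kpt b E p.2| ≤ 1 := by
          rw [abs_le]; constructor <;> [linarith [hpt.1]; linarith [hpt.2]]
        have h3 : |(b:ℝ) * c - (p.1.1:ℝ)| ≤ (b:ℝ) * |c| + (b:ℝ) := by
          calc |(b:ℝ) * c - (p.1.1:ℝ)| ≤ |(b:ℝ) * c| + |(p.1.1:ℝ)| := abs_sub _ _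
            _ ≤ (b:ℝ) * |c| + (b:ℝ) := by
                rw [abs_mul, abs_of_nonneg hb0.le, abs_of_nonneg ha0]
                linarith
        calc |((b:ℝ) * c - (p.1.1:ℝ)) - kpt b E p.2|
            ≤ |(b:ℝ) * c - (p.1.1:ℝ)| + |kpt b E p.2| := abs_sub _ _
          _ ≤ (b:ℝ) * |c| + (b:ℝ) + 1 := by linarith
      have hBn1 : (0:ℝ) ≤ (((b:ℝ) ^ (n+1))⁻¹) := by positivity
      calc ‖((b:ℝ) ^ (n+1))⁻¹‖ * (‖kw b E p.2‖ * ‖(((b:ℝ) * c - (p.1.1:ℝ)) - kpt b E p.2)‖ ^ n)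
          ≤ ‖((b:ℝ) ^ (n+1))⁻¹‖ * (‖kw b E p.2‖ * ((b:ℝ) * |c| + (b:ℝ) + 1) ^ n) := by
            apply mul_le_mul_of_nonneg_left _ (norm_nonneg _)
            apply mul_le_mul_of_nonneg_left _ (norm_nonneg _)
            exact pow_le_pow_left₀ (norm_nonneg _) h1 n
        _ = (((b:ℝ) ^ (n+1))⁻¹ * ((b:ℝ) * |c| + (b:ℝ) + 1) ^ n) * kw b E p.2 := by
            rw [Real.norm_eq_abs, Real.norm_eq_abs, abs_of_nonneg hw, abs_of_nonneg hBn1]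
            ring
  -- support of the "ite" version is in the range of j
  have hsupp : Function.support (fun X => if X = X₀ then 0 else F X) ⊆ Set.range j := by
    intro X hX
    have hne : X ≠ X₀ := by
      intro h; apply hX; subst h; simp
    have hnil : X.1 ≠ [] := fun h => hne (Subtype.ext h)
    rcases List.eq_nil_or_concat' X.1 with h | ⟨L, a, h⟩
    · exact absurd h hnil
    · have hmem : ∀ x ∈ L ++ [a], x < b ∧ x ∉ E := h ▸ X.2
      have hamem : a ∈ A := by
        have := hmem a (by simp)
        exact Finset.mem_sdiff.mpr ⟨Finset.mem_range.mpr this.1, this.2⟩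
      refine ⟨(⟨a, hamem⟩, ⟨L, fun x hx => hmem x (by simp [hx])⟩), ?_⟩
      exact Subtype.ext h.symm
  -- split the sum
  have split : WW b E n c = F X₀ + ∑' X, (if X = X₀ then 0 else F X) :=
    Summable.tsum_eq_add_tsum_ite hf X₀
  have hFX₀ : F X₀ = c ^ n := by
    rw [hF]; simp [kw, kpt, hX₀]
  have hrange : ∑' p : ↥A × KS b E, (fun X => if X = X₀ then 0 else F X) (j p)
      = ∑' X, (if X = X₀ then 0 else F X) := hjinj.tsum_eq hsupp
  have hite : ∀ p : ↥A × KS b E, (if j p = X₀ then 0 else F (j p)) = F (j p) :=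
    fun p => if_neg (hjne p)
  have hprod : ∑' p : ↥A × KS b E, F (j p)
      = ∑ a : ↥A, ∑' X : KS b E, F (j (a, X)) := by
    rw [Summable.tsum_prod hsum_j, tsum_fintype]
  have hinner : ∀ a : ↥A, ∑' X : KS b E, F (j (a, X))
      = ((b:ℝ) ^ (n+1))⁻¹ * WW b E n ((b:ℝ) * c - (a.1 : ℝ)) := by
    intro a
    rw [tsum_congr (fun X => hstep (a, X)), tsum_mul_left]
    rfl
  have hsum2 : ∑' X, (if X = X₀ then 0 else F X)
      = ∑ a ∈ A, ((b:ℝ) ^ (n+1))⁻¹ * WW b E n ((b:ℝ) * c - (a : ℝ)) := by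
    rw [← hrange]
    rw [tsum_congr hite, hprod]
    rw [Finset.sum_congr rfl (fun a _ => hinner a)]
    exact Finset.sum_coe_sort A (fun a => ((b:ℝ) ^ (n+1))⁻¹ * WW b E n ((b:ℝ) * c - (a : ℝ)))
  rw [split, hFX₀, hsum2, Finset.mul_sum]

lemma recurW (hb : 2 ≤ b) (hE : E.Nonempty) (hEsub : ∀ d ∈ E, d < b) (n : ℕ) (d : ℝ) :
    (b:ℝ) ^ (n+1) * vMoment b E n d = (b:ℝ) ^ (n+1) * d ^ n
      + ∑ i ∈ Finset.range (n+1), (n.choose i : ℝ) *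
          (∑ a ∈ Finset.range b \ E, ((b:ℝ) * d - d - (a:ℝ)) ^ i) * vMoment b E (n-i) d := by
  have hb0 := hBpos hb
  have h1 := WW_selfsim hb hE hEsub n d
  have h2 : ∀ a : ℕ, WW b E n ((b:ℝ) * d - (a:ℝ))
      = ∑ i ∈ Finset.range (n+1), (n.choose i : ℝ) * (((b:ℝ) * d - (a:ℝ)) - d) ^ i * WW b E (n-i) d :=
    fun a => WW_shift hb hE hEsub n _ d
  rw [Finset.sum_congr rfl (fun a _ => h2 a), Finset.sum_comm] at h1
  have h3 : ∀ i ∈ Finset.range (n+1),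
      ∑ a ∈ Finset.range b \ E, (n.choose i : ℝ) * (((b:ℝ) * d - (a:ℝ)) - d) ^ i * WW b E (n-i) d
      = (n.choose i : ℝ) * (∑ a ∈ Finset.range b \ E, ((b:ℝ) * d - d - (a:ℝ)) ^ i) * WW b E (n-i) d := by
    intro i _
    rw [Finset.mul_sum, Finset.sum_mul]
    apply Finset.sum_congr rfl
    intro a _
    have : ((b:ℝ) * d - (a:ℝ)) - d = (b:ℝ) * d - d - (a:ℝ) := by ring
    rw [this]
  rw [Finset.sum_congr rfl h3] at h1
  have hpow : ((b:ℝ) ^ (n+1)) ≠ 0 := by positivity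
  rw [vMoment_eq_WW hb hE hEsub]
  have h4 : ∀ i ∈ Finset.range (n+1),
      (n.choose i : ℝ) * (∑ a ∈ Finset.range b \ E, ((b:ℝ) * d - d - (a:ℝ)) ^ i) * vMoment b E (n-i) d
      = (n.choose i : ℝ) * (∑ a ∈ Finset.range b \ E, ((b:ℝ) * d - d - (a:ℝ)) ^ i) * WW b E (n-i) d := by
    intro i _
    rw [vMoment_eq_WW hb hE hEsub]
  rw [Finset.sum_congr rfl h4]
  rw [h1]
  field_simp

lemma sum_Icc_one (m : ℕ) (F : ℕ → ℝ) :
    ∑ j ∈ Finset.Icc 1 m, F j = ∑ i ∈ Finset.range m, F (i+1) := by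
  rw [← Finset.Ico_add_one_right_eq_Icc, Finset.sum_Ico_eq_sum_range]
  have hm : m + 1 - 1 = m := by omega
  rw [hm]
  exact Finset.sum_congr rfl (fun i _ => by rw [add_comm])

lemma pow_succ_diff (y : ℝ) (j : ℕ) :
    (y+1) ^ (j+1) - y ^ (j+1) = ∑ i ∈ Finset.range (j+1), ((j+1).choose i : ℝ) * y ^ i := by
  have h := add_pow y 1 (j+1)
  rw [Finset.sum_range_succ] at h
  simp only [one_pow, mul_one, Nat.choose_self, Nat.cast_one] at h
  rw [h, add_sub_cancel_right]
  exact Finset.sum_congr rfl fun i _ => mul_comm _ _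

lemma sum_triangle_reindex (m : ℕ) (F : ℕ → ℕ → ℝ) :
    ∑ k ∈ Finset.range m, ∑ i ∈ Finset.range (k+1), F k i
      = ∑ k ∈ Finset.range m, ∑ i ∈ Finset.range (m-k), F (k+i) i := by
  rw [Finset.sum_sigma', Finset.sum_sigma']
  apply Finset.sum_nbij' (i := fun p => (⟨p.1 - p.2, p.2⟩ : Σ _ : ℕ, ℕ))
    (j := fun p => (⟨p.1 + p.2, p.2⟩ : Σ _ : ℕ, ℕ))
  · intro p hp
    simp only [Finset.mem_sigma, Finset.mem_range] at hp ⊢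
    omega
  · intro p hp
    simp only [Finset.mem_sigma, Finset.mem_range] at hp ⊢
    omega
  · intro p hp
    obtain ⟨x, y⟩ := p
    simp only [Finset.mem_sigma, Finset.mem_range] at hp
    have hxy : x - y + y = x := by omega
    simp [hxy]
  · intro p hp
    obtain ⟨x, y⟩ := p
    simp only [Finset.mem_sigma, Finset.mem_range] at hp
    have hxy : x + y - y = x := by omega
    simp [hxy]
  · intro p hp
    simp only [Finset.mem_sigma, Finset.mem_range] at hp
    have h : p.1 - p.2 + p.2 = p.1 := by omega
    simp only
    rw [h]

lemma chooseId {m k i : ℕ} (hk : k + i ≤ m + 1) :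
    (m+1).choose (k+i) * (k+i).choose i = (m+1).choose k * ((m+1) - k).choose i := by
  have h1 : (k+i).choose i = (k+i).choose k := by
    rw [← Nat.choose_symm (Nat.le_add_right k i)]
    congr 1
    omega
  rw [h1, Nat.choose_mul (Nat.le_add_right k i)]
  have h2 : k + i - k = i := by omega
  rw [h2]

lemma final_algebra (B N d : ℝ) (P v : ℕ → ℝ) (m : ℕ) (hm : 1 ≤ m)
    (hrecur : ∀ k : ℕ, B^(k+1) * v k = B^(k+1) * d^k
      + ∑ i ∈ Finset.range (k+1), (k.choose i : ℝ) * P i * v (k-i))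
    (hN : P 0 = N) :
    ((m:ℝ)+1) * (B^(m+1) - N) * v m
      = B * ((d * B + 1)^(m+1) - (d * B)^(m+1))
        - ∑ j ∈ Finset.Icc 1 m, ((m+1).choose (j+1) : ℝ) *
            (B^(m+1-j) - ∑ i ∈ Finset.range (j+1), ((j+1).choose i : ℝ) * P i) * v (m-j) := by
  -- Split off the top term of the inner sum.
  have hsplit : ∀ j ∈ Finset.Icc 1 m,
      ((m+1).choose (j+1) : ℝ) *
          (B^(m+1-j) - ∑ i ∈ Finset.range (j+1), ((j+1).choose i : ℝ) * P i) * v (m-j)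
      = ((m+1).choose (j+1) : ℝ) *
          (B^(m+1-j) - ∑ i ∈ Finset.range j, ((j+1).choose i : ℝ) * P i) * v (m-j)
        - ((j:ℝ)+1) * ((m+1).choose (j+1) : ℝ) * P j * v (m-j) := by
    intro j _
    rw [Finset.sum_range_succ]
    have hchoose : (((j+1).choose j : ℕ) : ℝ) = (j:ℝ) + 1 := by
      rw [Nat.choose_succ_self_right]; push_cast; ring
    rw [hchoose]; ring
  rw [Finset.sum_congr rfl hsplit, Finset.sum_sub_distrib]
  -- Expansion of the leading term.
  have hexpand : B * ((d * B + 1) ^ (m + 1) - (d * B) ^ (m + 1))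
      = ∑ k ∈ Finset.range m, ((m+1).choose k : ℝ) * B^(k+1) * d^k
        + ((m:ℝ) + 1) * B^(m+1) * d^m := by
    have h := add_pow (d * B) 1 (m+1)
    rw [Finset.sum_range_succ] at h
    simp only [one_pow, mul_one, Nat.choose_self, Nat.cast_one] at h
    rw [h, Finset.sum_range_succ]
    have hlast : (((m+1).choose m : ℕ) : ℝ) = (m:ℝ) + 1 := by
      rw [Nat.choose_succ_self_right]; push_cast; ring
    have hsum : B * (∑ k ∈ Finset.range m, (d * B)^k * ((m+1).choose k : ℝ))
        = ∑ k ∈ Finset.range m, ((m+1).choose k : ℝ) * B^(k+1) * d^k := by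
      rw [Finset.mul_sum]
      apply Finset.sum_congr rfl
      intro k _
      rw [mul_pow, pow_succ]
      ring
    calc B * ((∑ k ∈ Finset.range m, (d * B)^k * ((m+1).choose k : ℝ)
            + (d * B)^m * ((m+1).choose m : ℝ) + (d * B)^(m+1))
          - (d * B)^(m+1))
        = B * (∑ k ∈ Finset.range m, (d * B)^k * ((m+1).choose k : ℝ))
          + B * ((d * B)^m * ((m+1).choose m : ℝ)) := by
          ring
      _ = ∑ k ∈ Finset.range m, ((m+1).choose k : ℝ) * B^(k+1) * d^k
          + ((m:ℝ) + 1) * B^(m+1) * d^m := by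
          rw [hsum, hlast, mul_pow, pow_succ]
          ring
  -- Recurrence at m, with the i = 0 term split off.
  have hmsplit : ((m:ℝ) + 1) * (B^(m+1) - N) * v m
      = ((m:ℝ) + 1) * B^(m+1) * d^m
        + ∑ j ∈ Finset.Icc 1 m, ((j:ℝ) + 1) * ((m + 1).choose (j + 1) : ℝ) * P j * v (m-j) := by
    have h := hrecur m
    rw [Finset.sum_range_succ'] at h
    have hf0 : ((m.choose 0 : ℕ) : ℝ) * P 0 * v (m - 0) = N * v m := by
      simp [hN]
    rw [hf0] at h
    have hIcc : ∑ j ∈ Finset.Icc 1 m, ((j:ℝ) + 1) * ((m + 1).choose (j + 1) : ℝ) * P j * v (m-j)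
        = ((m:ℝ) + 1) * ∑ i ∈ Finset.range m, ((m.choose (i+1) : ℕ) : ℝ) * P (i+1) * v (m-(i+1)) := by
      rw [sum_Icc_one m (fun j => ((j:ℝ) + 1) * ((m + 1).choose (j + 1) : ℝ) * P j * v (m-j))]
      rw [Finset.mul_sum]
      apply Finset.sum_congr rfl
      intro i _
      have hnat : (m+1) * m.choose (i+1) = (m+1).choose (i+2) * (i+2) := by
        have := Nat.add_one_mul_choose_eq m (i+1)
        simpa [Nat.succ_eq_add_one] using this
      have hcast : ((m:ℝ) + 1) * ((m.choose (i+1) : ℕ) : ℝ)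
          = (((m+1).choose (i+2) : ℕ) : ℝ) * ((i:ℝ) + 2) := by
        exact_mod_cast congrArg (Nat.cast (R := ℝ)) hnat
      have e1 : i + 1 + 1 = i + 2 := by omega
      rw [e1]
      push_cast
      linear_combination (-(P (i+1) * v (m-(i+1)))) * hcast
    rw [hIcc]
    linear_combination ((m:ℝ) + 1) * h
  -- The key cancellation identity.
  have hstar : ∑ j ∈ Finset.Icc 1 m, ((m+1).choose (j+1) : ℝ) *
        (B^(m+1-j) - ∑ i ∈ Finset.range j, ((j+1).choose i : ℝ) * P i) * v (m-j)
      = ∑ k ∈ Finset.range m, ((m+1).choose k : ℝ) * B^(k+1) * d^k := by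
    rw [sum_Icc_one m (fun j => ((m+1).choose (j+1) : ℝ) *
        (B^(m+1-j) - ∑ i ∈ Finset.range j, ((j+1).choose i : ℝ) * P i) * v (m-j))]
    rw [← Finset.sum_range_reflect]
    have hterm : ∀ k ∈ Finset.range m,
        ((m+1).choose ((m - 1 - k + 1) + 1) : ℝ) *
          (B^(m+1-(m - 1 - k + 1)) - ∑ i ∈ Finset.range (m - 1 - k + 1),
            (((m - 1 - k + 1)+1).choose i : ℝ) * P i) * v (m-(m - 1 - k + 1))
        = ((m+1).choose k : ℝ) *
            (B^(k+1) - ∑ i ∈ Finset.range (m-k), ((m-k+1).choose i : ℝ) * P i) * v k := by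
      intro k hk
      have hk' : k < m := Finset.mem_range.mp hk
      have e1 : m - 1 - k + 1 = m - k := by omega
      rw [e1]
      have e2 : m + 1 - (m - k) = k + 1 := by omega
      have e3 : m - (m - k) = k := by omega
      rw [e2, e3]
      have e4 : (m+1).choose ((m-k)+1) = (m+1).choose k := by
        have e5 : m - k + 1 = (m+1) - k := by omega
        rw [e5, Nat.choose_symm (by omega)]
      rw [e4]
    rw [Finset.sum_congr rfl hterm]
    have hexp : ∀ k ∈ Finset.range m,
        ((m+1).choose k : ℝ) *
          (B^(k+1) - ∑ i ∈ Finset.range (m-k), ((m-k+1).choose i : ℝ) * P i) * v k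
        = ((m+1).choose k : ℝ) * B^(k+1) * d^k
          + ∑ i ∈ Finset.range (k+1), ((m+1).choose k : ℝ) * (k.choose i : ℝ) * P i * v (k-i)
          - ∑ i ∈ Finset.range (m-k), ((m+1).choose k : ℝ) * ((m-k+1).choose i : ℝ) * P i * v k := by
      intro k _
      have h := hrecur k
      have hS1 : ((m+1).choose k : ℝ) * (∑ i ∈ Finset.range (m-k), ((m-k+1).choose i : ℝ) * P i) * v k
          = ∑ i ∈ Finset.range (m-k), ((m+1).choose k : ℝ) * ((m-k+1).choose i : ℝ) * P i * v k := by
        rw [Finset.mul_sum, Finset.sum_mul]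
        exact Finset.sum_congr rfl (fun i _ => by ring)
      have hS2 : ((m+1).choose k : ℝ) * (∑ i ∈ Finset.range (k+1), (k.choose i : ℝ) * P i * v (k-i))
          = ∑ i ∈ Finset.range (k+1), ((m+1).choose k : ℝ) * (k.choose i : ℝ) * P i * v (k-i) := by
        rw [Finset.mul_sum]
        exact Finset.sum_congr rfl (fun i _ => by ring)
      calc ((m+1).choose k : ℝ) *
            (B^(k+1) - ∑ i ∈ Finset.range (m-k), ((m-k+1).choose i : ℝ) * P i) * v k
          = ((m+1).choose k : ℝ) * (B^(k+1) * v k)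
            - ((m+1).choose k : ℝ) * (∑ i ∈ Finset.range (m-k), ((m-k+1).choose i : ℝ) * P i) * v k := by
            ring
        _ = _ := by
            rw [h, hS1, mul_add, hS2]
            ring
    rw [Finset.sum_congr rfl hexp]
    rw [Finset.sum_sub_distrib, Finset.sum_add_distrib]
    have hdd : ∑ k ∈ Finset.range m, ∑ i ∈ Finset.range (k+1),
          ((m+1).choose k : ℝ) * (k.choose i : ℝ) * P i * v (k-i)
        = ∑ k ∈ Finset.range m, ∑ i ∈ Finset.range (m-k),
          ((m+1).choose k : ℝ) * ((m-k+1).choose i : ℝ) * P i * v k := by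
      rw [sum_triangle_reindex m (fun K i => ((m+1).choose K : ℝ) * (K.choose i : ℝ) * P i * v (K-i))]
      apply Finset.sum_congr rfl
      intro k hk
      apply Finset.sum_congr rfl
      intro i hi
      have hk' : k < m := Finset.mem_range.mp hk
      have hi' : i < m - k := Finset.mem_range.mp hi
      have e1 : k + i - i = k := by omega
      have e2 : m - k + 1 = (m+1) - k := by omega
      have hnat := chooseId (m := m) (k := k) (i := i) (by omega)
      have hcast : (((m+1).choose (k+i) : ℕ) : ℝ) * (((k+i).choose i : ℕ) : ℝ)
          = (((m+1).choose k : ℕ) : ℝ) * ((((m+1) - k).choose i : ℕ) : ℝ) := by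
        exact_mod_cast congrArg (Nat.cast (R := ℝ)) hnat
      rw [e1, e2]
      linear_combination (P i * v k) * hcast
    rw [hdd]
    ring
  linarith [hexpand, hmsplit, hstar]

theorem vMoment_recurrence_two (b : ℕ) (hb : 2 ≤ b) (E : Finset ℕ)
    (hE : E.Nonempty) (hEsub : ∀ d ∈ E, d < b) :
    ∀ d : ℝ, ∀ m : ℕ, 1 ≤ m →
      ((m : ℝ) + 1) * ((b : ℝ) ^ (m + 1) - ((Finset.range b \ E).card : ℝ)) *
          vMoment b E m d =
        (b : ℝ) * ((d * b + 1) ^ (m + 1) - (d * b) ^ (m + 1)) -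
        ∑ j ∈ Finset.Icc 1 m, ((m + 1).choose (j + 1) : ℝ) *
          ((b : ℝ) ^ (m + 1 - j)
            - ((b : ℝ) * d + 1 - d) ^ (j + 1)
            + ((b : ℝ) - 1) ^ (j + 1) * (d - 1) ^ (j + 1)
            + ∑ a ∈ E, (((b : ℝ) * d - (a : ℝ) - d + 1) ^ (j + 1)
                - ((b : ℝ) * d - (a : ℝ) - d) ^ (j + 1))) *
          vMoment b E (m - j) d := by
  intro d m hm
  classical
  have hEA : E ⊆ Finset.range b := fun a ha => Finset.mem_range.mpr (hEsub a ha)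
  have key := final_algebra (b : ℝ) ((Finset.range b \ E).card : ℝ) d
    (fun i => ∑ a ∈ Finset.range b \ E, ((b:ℝ) * d - d - (a:ℝ)) ^ i)
    (fun k => vMoment b E k d) m hm
    (fun k => recurW hb hE hEsub k d)
    (by simp)
  refine key.trans ?_
  congr 1
  apply Finset.sum_congr rfl
  intro j hj
  -- it suffices to identify the middle factors
  have hmid : ((b:ℝ)^(m+1-j) - ∑ i ∈ Finset.range (j+1), ((j+1).choose i : ℝ) *
        ∑ a ∈ Finset.range b \ E, ((b:ℝ) * d - d - (a:ℝ)) ^ i)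
      = ((b : ℝ) ^ (m + 1 - j)
          - ((b : ℝ) * d + 1 - d) ^ (j + 1)
          + ((b : ℝ) - 1) ^ (j + 1) * (d - 1) ^ (j + 1)
          + ∑ a ∈ E, (((b : ℝ) * d - (a : ℝ) - d + 1) ^ (j + 1)
              - ((b : ℝ) * d - (a : ℝ) - d) ^ (j + 1))) := by
    have htel : ∑ a ∈ Finset.range b,
        (((b:ℝ) * d - (a:ℝ) - d + 1) ^ (j + 1) - ((b:ℝ) * d - (a:ℝ) - d) ^ (j + 1))
        = ((b:ℝ) * d + 1 - d) ^ (j + 1) - ((b:ℝ) - 1) ^ (j + 1) * (d - 1) ^ (j + 1) := by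
      have h := Finset.sum_range_sub' (f := fun a : ℕ => ((b:ℝ) * d - (a:ℝ) - d + 1) ^ (j+1)) b
      have heq : ∀ a ∈ Finset.range b,
          (((b:ℝ) * d - (a:ℝ) - d + 1) ^ (j + 1) - ((b:ℝ) * d - (a:ℝ) - d) ^ (j + 1))
          = ((b:ℝ) * d - (a:ℝ) - d + 1) ^ (j+1) - ((b:ℝ) * d - ((a+1 : ℕ):ℝ) - d + 1) ^ (j+1) := by
        intro a _
        have h1 : (b:ℝ) * d - ((a+1 : ℕ):ℝ) - d + 1 = (b:ℝ) * d - (a:ℝ) - d := by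
          push_cast; ring
        rw [h1]
      rw [Finset.sum_congr rfl heq, h]
      have h0 : (b:ℝ) * d - ((0:ℕ):ℝ) - d + 1 = (b:ℝ) * d + 1 - d := by push_cast; ring
      have hbb : (b:ℝ) * d - ((b:ℕ):ℝ) - d + 1 = ((b:ℝ) - 1) * (d - 1) := by push_cast; ring
      rw [h0, hbb, mul_pow]
    have hΔ : ∀ a : ℕ,
        (((b:ℝ) * d - (a:ℝ) - d + 1) ^ (j + 1) - ((b:ℝ) * d - (a:ℝ) - d) ^ (j + 1))
        = ∑ i ∈ Finset.range (j+1), ((j+1).choose i : ℝ) * ((b:ℝ) * d - d - (a:ℝ)) ^ i := by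
      intro a
      have h0 : (b:ℝ) * d - (a:ℝ) - d + 1 = ((b:ℝ) * d - d - (a:ℝ)) + 1 := by ring
      have h1 : (b:ℝ) * d - (a:ℝ) - d = (b:ℝ) * d - d - (a:ℝ) := by ring
      rw [h0, h1, pow_succ_diff]
    have hsplitA : ∑ a ∈ Finset.range b \ E,
          (((b:ℝ) * d - (a:ℝ) - d + 1) ^ (j + 1) - ((b:ℝ) * d - (a:ℝ) - d) ^ (j + 1))
        + ∑ a ∈ E, (((b:ℝ) * d - (a:ℝ) - d + 1) ^ (j + 1) - ((b:ℝ) * d - (a:ℝ) - d) ^ (j + 1))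
        = ∑ a ∈ Finset.range b,
          (((b:ℝ) * d - (a:ℝ) - d + 1) ^ (j + 1) - ((b:ℝ) * d - (a:ℝ) - d) ^ (j + 1)) :=
      Finset.sum_sdiff hEA
    have hAΔ : ∑ a ∈ Finset.range b \ E,
        (((b:ℝ) * d - (a:ℝ) - d + 1) ^ (j + 1) - ((b:ℝ) * d - (a:ℝ) - d) ^ (j + 1))
        = ∑ i ∈ Finset.range (j+1), ((j+1).choose i : ℝ) *
            ∑ a ∈ Finset.range b \ E, ((b:ℝ) * d - d - (a:ℝ)) ^ i := by
      rw [Finset.sum_congr rfl (fun a _ => hΔ a), Finset.sum_comm]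
      exact Finset.sum_congr rfl (fun i _ => by rw [← Finset.mul_sum])
    linarith [htel, hsplitA, hAΔ]
  rw [hmid]
end
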